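/- arXiv:1301.3979 — 6 statements merged into one kernel-verified Lean document; each statement's English description precedes it below -/
import Mathlib

section
/- Every finite cograph G satisfies χ(G) = ω(G); in particular, since the class of cographs is hereditary, every induced subgraph of a cograph G satisfies χ = ω, i.e. cographs are perfect. -/
/-- A cograph: a simple graph with no induced subgraph isomorphic to the path `P₄`
on four vertices. -/
def SimpleGraph.IsCograph {α : Type*} (G : SimpleGraph α) : Prop :=
  IsEmpty (SimpleGraph.pathGraph 4 ↪g G)

namespace CographPerfectAux

open SimpleGraph

universe u

variable {α : Type*}

/-! ### Generic embedding tools -/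

/-- Complement of a graph embedding. -/
def embCompl {V W : Type*} {H : SimpleGraph V} {K : SimpleGraph W} (f : H ↪g K) : Hᶜ ↪g Kᶜ :=
  ⟨f.toEmbedding, by
    intro a b
    simp only [compl_adj]
    exact and_congr f.toEmbedding.injective.ne_iff (not_congr f.map_adj_iff)⟩

/-- `P₄` is self-complementary. -/
def p4iso : pathGraph 4 ≃g (pathGraph 4)ᶜ := by
  refine ⟨Equiv.mk ![1,3,0,2] ![2,0,3,1] (by decide) (by decide), ?_⟩
  intro a b
  fin_cases a <;> fin_cases b <;>
    simp [compl_adj, pathGraph_adj, Fin.ext_iff] <;> decide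

set_option linter.unreachableTactic false in
set_option linter.unusedTactic false in
/-- Build an embedding of `P₄` from an explicit induced path. -/
lemma p4_embedding (G : SimpleGraph α) {v0 v1 v2 v3 : α}
    (h01 : G.Adj v0 v1) (h12 : G.Adj v1 v2) (h23 : G.Adj v2 v3)
    (h02 : ¬G.Adj v0 v2) (h03 : ¬G.Adj v0 v3) (h13 : ¬G.Adj v1 v3)
    (n02 : v0 ≠ v2) (n03 : v0 ≠ v3) (n13 : v1 ≠ v3) :
    Nonempty (pathGraph 4 ↪g G) := by
  have inj : Function.Injective (![v0, v1, v2, v3] : Fin 4 → α) := by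
    intro i j hij
    fin_cases i <;> fin_cases j <;> first
      | rfl
      | (exfalso; simp only [Matrix.cons_val_zero, Matrix.cons_val_one, Matrix.head_cons,
          Matrix.cons_val_two, Matrix.tail_cons, Matrix.cons_val_three] at hij;
         first
           | exact h01.ne hij | exact h01.ne hij.symm
           | exact h12.ne hij | exact h12.ne hij.symm
           | exact h23.ne hij | exact h23.ne hij.symm
           | exact n02 hij | exact n02 hij.symm
           | exact n03 hij | exact n03 hij.symm
           | exact n13 hij | exact n13 hij.symm)
  refine ⟨⟨⟨![v0, v1, v2, v3], inj⟩, ?_⟩⟩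
  intro a b
  fin_cases a <;> fin_cases b <;>
    simp [pathGraph_adj, Fin.ext_iff, show ((3 : Fin 4) : ℕ) = 3 from rfl,
      show ((2 : Fin 4) : ℕ) = 2 from rfl, show ((1 : Fin 4) : ℕ) = 1 from rfl] <;>
    first
      | exact h01 | exact h01.symm | exact h12 | exact h12.symm
      | exact h23 | exact h23.symm
      | exact h02 | exact fun h => h02 h.symm
      | exact h03 | exact fun h => h03 h.symm
      | exact h13 | exact fun h => h13 h.symm
      | exact G.irrefl

/-! ### Reachability avoiding a vertex, and Seinsche's theorem -/

/-- Reachability avoiding a vertex `x`. -/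
def RTx (G : SimpleGraph α) (x : α) : α → α → Prop :=
  Relation.ReflTransGen (fun a b => G.Adj a b ∧ a ≠ x ∧ b ≠ x)

lemma rtx_symm {G : SimpleGraph α} {x u v : α} (h : RTx G x u v) : RTx G x v u :=
  (@Relation.ReflTransGen.symmetric _ _ ⟨fun _ _ h => ⟨h.1.symm, h.2.2, h.2.1⟩⟩).symm _ _ h

lemma toward {G : SimpleGraph α} {x y : α} (w : G.Walk y x) (hy : y ≠ x) :
    ∃ a, G.Adj x a ∧ RTx G x y a := by
  induction w with
  | nil => exact absurd rfl hy
  | @cons y y₁ x h p ih =>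
    by_cases hy₁ : y₁ = x
    · subst hy₁; exact ⟨y, h.symm, Relation.ReflTransGen.refl⟩
    · obtain ⟨a, ha, hrt⟩ := ih hy₁
      exact ⟨a, ha, Relation.ReflTransGen.head ⟨h, hy, hy₁⟩ hrt⟩

lemma flip_pair {G : SimpleGraph α} {x y a' : α} (h : RTx G x y a')
    (hya : G.Adj x a') (hy : ¬G.Adj x y) :
    ∃ a b, G.Adj x a ∧ ¬G.Adj x b ∧ (G.Adj b a ∧ b ≠ x ∧ a ≠ x) ∧ RTx G x y b := by
  induction h with
  | refl => exact absurd hya hy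
  | @tail m c hym hmc ih =>
    by_cases hxm : G.Adj x m
    · exact ih hxm
    · exact ⟨c, m, hya, hxm, hmc, hym⟩

/-- The key construction: if `G` and `Gᶜ` are connected but `G` minus the vertex `x`
is disconnected, then `G` contains an induced `P₄`. -/
lemma case1 {G : SimpleGraph α} {x : α}
    (hpre : G.Preconnected) (hcpre : Gᶜ.Preconnected)
    (u v : α) (hu : u ≠ x) (hv : v ≠ x) (huv : ¬RTx G x u v) :
    Nonempty (pathGraph 4 ↪g G) := by
  obtain ⟨wc⟩ := hcpre x u
  obtain ⟨y, hxy⟩ : ∃ y, Gᶜ.Adj x y := by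
    cases wc with
    | nil => exact absurd rfl hu.symm
    | cons h _ => exact ⟨_, h⟩
  obtain ⟨hxyne, hnxy⟩ := (G.compl_adj x y).mp hxy
  have hy : y ≠ x := hxyne.symm
  obtain ⟨z, hz, hyz⟩ : ∃ z, z ≠ x ∧ ¬RTx G x y z := by
    by_cases h1 : RTx G x y u
    · exact ⟨v, hv, fun h2 => huv ((rtx_symm h1).trans h2)⟩
    · exact ⟨u, hu, h1⟩
  obtain ⟨wyx⟩ := hpre y x
  obtain ⟨a', ha', hrta⟩ := toward wyx hy
  obtain ⟨a, b, hxa, hxb, ⟨hba, hbx, hax⟩, hrtyb⟩ := flip_pair hrta ha' hnxy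
  obtain ⟨wzx⟩ := hpre z x
  obtain ⟨c, hxc, hrtzc⟩ := toward wzx hz
  have hcx : c ≠ x := hxc.ne'
  have hrtya : RTx G x y a := hrtyb.tail ⟨hba, hbx, hax⟩
  have key : ∀ d, RTx G x y d → d ≠ x → ∀ e, RTx G x z e → e ≠ x →
      ¬(d = e ∨ G.Adj d e) := by
    rintro d hd hdx e he hex (rfl | hde)
    · exact hyz (hd.trans (rtx_symm he))
    · exact hyz ((hd.tail ⟨hde, hdx, hex⟩).trans (rtx_symm he))
  have hbc := key b hrtyb hbx c hrtzc hcx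
  have hac := key a hrtya hax c hrtzc hcx
  exact p4_embedding G hba hxa.symm hxc (fun h => hxb h.symm)
    (fun h => hbc (Or.inr h)) (fun h => hac (Or.inr h))
    hbx (fun h => hbc (Or.inl h)) (fun h => hac (Or.inl h))

lemma compl_induce (G : SimpleGraph α) (s : Set α) :
    (G.induce s)ᶜ = (Gᶜ).induce s := by
  ext ⟨a, ha⟩ ⟨b, hb⟩
  simp [compl_adj, Subtype.ext_iff]

lemma rtx_reach {G : SimpleGraph α} {x u v : α} (h : RTx G x u v) :
    ∀ (hu : u ≠ x) (hv : v ≠ x),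
      (G.induce {x}ᶜ).Reachable ⟨u, by simp [hu]⟩ ⟨v, by simp [hv]⟩ := by
  induction h with
  | refl => exact fun _ _ => Reachable.refl _
  | @tail m w hum hmw ih =>
    intro hu hw
    refine (ih hu hmw.2.1).trans (Adj.reachable ?_)
    exact hmw.1

/-- Seinsche: a graph on at least two vertices that is connected with connected
complement contains an induced `P₄`. -/
lemma p4_exists (n : ℕ) : ∀ (α : Type u) [Fintype α] (G : SimpleGraph α),
    Fintype.card α = n → 2 ≤ Fintype.card α → G.Preconnected → Gᶜ.Preconnected →
    Nonempty (pathGraph 4 ↪g G) := by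
  induction n using Nat.strong_induction_on with
  | _ n ih =>
  intro α _ G hn hcard hpre hcpre
  classical
  obtain ⟨x, z, hxz⟩ := Fintype.exists_pair_of_one_lt_card (α := α) (by omega)
  by_cases hP : ∀ u v : α, u ≠ x → v ≠ x → RTx G x u v
  · by_cases hQ : ∀ u v : α, u ≠ x → v ≠ x → RTx Gᶜ x u v
    · -- recurse on the induced subgraph on `{x}ᶜ`
      set s : Set α := {x}ᶜ with hs
      have hcards : Fintype.card s < n := by
        rw [← hn]
        exact Fintype.card_subtype_lt (x := x) (by simp [hs])
      by_cases h2 : 2 ≤ Fintype.card s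
      · have hpre' : (G.induce s).Preconnected := by
          rintro ⟨u, hu⟩ ⟨v, hv⟩
          have hu' : u ≠ x := hu
          have hv' : v ≠ x := hv
          exact rtx_reach (hP u v hu' hv') hu' hv'
        have hcpre' : (G.induce s)ᶜ.Preconnected := by
          rw [compl_induce]
          rintro ⟨u, hu⟩ ⟨v, hv⟩
          have hu' : u ≠ x := hu
          have hv' : v ≠ x := hv
          exact rtx_reach (hQ u v hu' hv') hu' hv'
        obtain ⟨f⟩ := ih _ hcards s (G.induce s) rfl h2 hpre' hcpre'
        exact ⟨(Embedding.induce s).comp f⟩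
      · -- at most one vertex besides `x`: impossible
        exfalso
        have hzx : z ≠ x := hxz.symm
        obtain ⟨wzx⟩ := hpre z x
        obtain ⟨a, ha, -⟩ := toward wzx hzx
        obtain ⟨wzx'⟩ := hcpre z x
        obtain ⟨b, hb, -⟩ := toward wzx' hzx
        have hsub : Subsingleton s :=
          Fintype.card_le_one_iff_subsingleton.mp (by omega)
        have hab : a = b := by
          have := hsub.elim ⟨a, by simp [hs, ha.ne']⟩ ⟨b, by simp [hs, hb.ne']⟩
          exact congrArg Subtype.val this
        rw [hab] at ha
        exact ((G.compl_adj x b).mp hb).2 ha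
    · push_neg at hQ
      obtain ⟨u, v, hu, hv, huv⟩ := hQ
      have hpre2 : Gᶜᶜ.Preconnected := by rwa [compl_compl]
      obtain ⟨f⟩ := case1 (G := Gᶜ) (x := x) hcpre hpre2 u v hu hv huv
      have h := compl_compl G
      exact ⟨h ▸ ((embCompl f).comp p4iso.toEmbedding)⟩
  · push_neg at hP
    obtain ⟨u, v, hu, hv, huv⟩ := hP
    exact case1 hpre hcpre u v hu hv huv

/-! ### Coloring and clique number lemmas -/

lemma union_colorable {G : SimpleGraph α} {A : Set α}
    (hsep : ∀ a ∈ A, ∀ b ∈ Aᶜ, ¬G.Adj a b) {n : ℕ}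
    (h1 : (G.induce A).Colorable n) (h2 : (G.induce Aᶜ).Colorable n) :
    G.Colorable n := by
  classical
  obtain ⟨c1⟩ := h1
  obtain ⟨c2⟩ := h2
  refine ⟨Coloring.mk
    (fun v => if h : v ∈ A then c1 ⟨v, h⟩ else c2 ⟨v, h⟩) ?_⟩
  intro v w hvw
  by_cases hv : v ∈ A <;> by_cases hw : w ∈ A <;>
    simp only [hv, hw, dif_pos, dif_neg, not_false_iff]
  · exact c1.valid (show (G.induce A).Adj ⟨v, hv⟩ ⟨w, hw⟩ from hvw)
  · exact absurd hvw (hsep v hv w hw)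
  · exact absurd hvw.symm (hsep w hw v hv)
  · exact c2.valid (show (G.induce Aᶜ).Adj ⟨v, hv⟩ ⟨w, hw⟩ from hvw)

lemma join_colorable {G : SimpleGraph α} {A : Set α} {m n : ℕ}
    (h1 : (G.induce A).Colorable m) (h2 : (G.induce Aᶜ).Colorable n) :
    G.Colorable (m + n) := by
  classical
  obtain ⟨c1⟩ := h1
  obtain ⟨c2⟩ := h2
  refine ⟨Coloring.mk
    (fun v => if h : v ∈ A then Fin.castAdd n (c1 ⟨v, h⟩) else Fin.natAdd m (c2 ⟨v, h⟩)) ?_⟩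
  intro v w hvw
  by_cases hv : v ∈ A <;> by_cases hw : w ∈ A <;>
    simp only [hv, hw, dif_pos, dif_neg, not_false_iff]
  · intro h
    have hval : (c1 ⟨v, hv⟩).val = (c1 ⟨w, hw⟩).val := by
      exact congrArg (Fin.val : Fin (m+n) → ℕ) h
    exact c1.valid (show (G.induce A).Adj ⟨v, hv⟩ ⟨w, hw⟩ from hvw) (Fin.ext hval)
  · intro h
    have hval : (c1 ⟨v, hv⟩).val = m + (c2 ⟨w, hw⟩).val := by
      exact congrArg (Fin.val : Fin (m+n) → ℕ) h
    have := (c1 ⟨v, hv⟩).isLt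
    omega
  · intro h
    have hval : m + (c2 ⟨v, hv⟩).val = (c1 ⟨w, hw⟩).val := by
      exact congrArg (Fin.val : Fin (m+n) → ℕ) h
    have := (c1 ⟨w, hw⟩).isLt
    omega
  · intro h
    have hval : m + (c2 ⟨v, hv⟩).val = m + (c2 ⟨w, hw⟩).val := by
      exact congrArg (Fin.val : Fin (m+n) → ℕ) h
    exact c2.valid (show (G.induce Aᶜ).Adj ⟨v, hv⟩ ⟨w, hw⟩ from hvw) (Fin.ext (by omega))

lemma cliqueNum_induce_le [Fintype α] (G : SimpleGraph α) (A : Set α) :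
    (G.induce A).cliqueNum ≤ G.cliqueNum := by
  classical
  have : Fintype ↥A := Fintype.ofFinite ↥A
  obtain ⟨s, hs⟩ := (G.induce A).exists_isNClique_cliqueNum
  have hclique : G.IsClique (s.map (Function.Embedding.subtype _)) := by
    rintro a ha b hb hab
    simp only [Finset.coe_map, Set.mem_image, Finset.mem_coe] at ha hb
    obtain ⟨⟨a', ha'⟩, has, rfl⟩ := ha
    obtain ⟨⟨b', hb'⟩, hbs, rfl⟩ := hb
    have := hs.isClique has hbs (by simpa using hab)
    exact this
  calc (G.induce A).cliqueNum = (s.map (Function.Embedding.subtype _)).card := by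
        rw [Finset.card_map, hs.card_eq]
    _ ≤ G.cliqueNum := hclique.card_le_cliqueNum

lemma join_cliqueNum_le [Fintype α] {G : SimpleGraph α} {A : Set α}
    (hall : ∀ a ∈ A, ∀ b ∈ Aᶜ, G.Adj a b) :
    (G.induce A).cliqueNum + (G.induce Aᶜ).cliqueNum ≤ G.cliqueNum := by
  classical
  have : Fintype ↥A := Fintype.ofFinite ↥A
  have : Fintype ↥(Aᶜ) := Fintype.ofFinite ↥(Aᶜ)
  obtain ⟨s, hs⟩ := (G.induce A).exists_isNClique_cliqueNum
  obtain ⟨t, ht⟩ := (G.induce Aᶜ).exists_isNClique_cliqueNum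
  set s' : Finset α := s.map (Function.Embedding.subtype _) with hs'
  set t' : Finset α := t.map (Function.Embedding.subtype _) with ht'
  have hsA : ∀ a ∈ s', a ∈ A := by
    intro a ha
    simp only [hs', Finset.mem_map, Function.Embedding.coe_subtype] at ha
    obtain ⟨⟨a', ha'⟩, -, rfl⟩ := ha
    exact ha'
  have htA : ∀ a ∈ t', a ∈ Aᶜ := by
    intro a ha
    simp only [ht', Finset.mem_map, Function.Embedding.coe_subtype] at ha
    obtain ⟨⟨a', ha'⟩, -, rfl⟩ := ha
    exact ha'
  have hdisj : Disjoint s' t' := by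
    rw [Finset.disjoint_left]
    intro a has hat
    exact (htA a hat) (hsA a has)
  have hclique : G.IsClique (s' ∪ t' : Finset α) := by
    intro a ha b hb hab
    simp only [Finset.coe_union, Set.mem_union, Finset.mem_coe] at ha hb
    rcases ha with ha | ha <;> rcases hb with hb | hb
    · obtain ⟨⟨a', ha'⟩, has, rfl⟩ := Finset.mem_map.mp ha
      obtain ⟨⟨b', hb'⟩, hbs, rfl⟩ := Finset.mem_map.mp hb
      exact hs.isClique has hbs (by simpa using hab)
    · exact hall a (hsA a ha) b (htA b hb)
    · exact (hall b (hsA b hb) a (htA a ha)).symm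
    · obtain ⟨⟨a', ha'⟩, has, rfl⟩ := Finset.mem_map.mp ha
      obtain ⟨⟨b', hb'⟩, hbs, rfl⟩ := Finset.mem_map.mp hb
      exact ht.isClique has hbs (by simpa using hab)
  calc (G.induce A).cliqueNum + (G.induce Aᶜ).cliqueNum
      = (s' ∪ t').card := by
        rw [Finset.card_union_of_disjoint hdisj, Finset.card_map, Finset.card_map,
          hs.card_eq, ht.card_eq]
    _ ≤ G.cliqueNum := hclique.card_le_cliqueNum

lemma cliqueNum_cast_le_chromaticNumber [Fintype α] (G : SimpleGraph α) :
    (G.cliqueNum : ℕ∞) ≤ G.chromaticNumber := by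
  classical
  have hcol : G.Colorable (ENat.toNat G.chromaticNumber) :=
    colorable_chromaticNumber_of_fintype G
  set n := ENat.toNat G.chromaticNumber with hn
  have hfree : G.CliqueFree (n + 1) := hcol.cliqueFree (Nat.lt_succ_self n)
  have hle : G.cliqueNum ≤ n := by
    by_contra h
    push_neg at h
    obtain ⟨s, hs⟩ := G.exists_isNClique_cliqueNum
    exact (hfree.mono h) s hs
  have hne : G.chromaticNumber ≠ ⊤ :=
    (G.colorable_of_fintype.chromaticNumber_le.trans_lt (WithTop.coe_lt_top _)).ne
  calc (G.cliqueNum : ℕ∞) ≤ (n : ℕ∞) := by exact_mod_cast hle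
    _ = G.chromaticNumber := ENat.coe_toNat hne

/-! ### Cographs -/

lemma isCograph_induce {G : SimpleGraph α} (hG : G.IsCograph) (A : Set α) :
    (G.induce A).IsCograph :=
  ⟨fun f => hG.false ((Embedding.induce A).comp f)⟩

/-- The key induction: every finite cograph can be colored with `cliqueNum` colors. -/
lemma key (n : ℕ) : ∀ (α : Type u) [Fintype α] (G : SimpleGraph α),
    Fintype.card α = n → G.IsCograph → G.Colorable G.cliqueNum := by
  induction n using Nat.strong_induction_on with
  | _ n ih =>
  intro α _ G hn hG
  classical
  rcases le_or_gt (Fintype.card α) 1 with h1 | h1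
  · rcases isEmpty_or_nonempty α with hE | hNE
    · exact (Colorable.of_isEmpty (G := G) 0).mono (Nat.zero_le _)
    · -- subsingleton: no edges, 1 ≤ cliqueNum
      have hsub : Subsingleton α := Fintype.card_le_one_iff_subsingleton.mp h1
      obtain ⟨a⟩ := hNE
      have hone : (1 : ℕ) ≤ G.cliqueNum := by
        have hcl : G.IsClique ({a} : Finset α) := by simp
        simpa using hcl.card_le_cliqueNum
      have hcol : G.Colorable 1 := by
        refine ⟨Coloring.mk (fun _ => 0) ?_⟩
        intro v w hvw
        exact absurd (hsub.elim v w) hvw.ne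
      exact hcol.mono hone
  · -- at least two vertices: G or Gᶜ is disconnected
    have hsein : ¬G.Preconnected ∨ ¬Gᶜ.Preconnected := by
      by_contra h
      push_neg at h
      exact hG.false (p4_exists (Fintype.card α) α G rfl (by omega) h.1 h.2).some
    rcases hsein with hd | hd
    · -- G disconnected: split into a component and its complement
      simp only [Preconnected, not_forall] at hd
      obtain ⟨u, v, huv⟩ := hd
      set A : Set α := {w | G.Reachable u w} with hA
      have huA : u ∈ A := Reachable.refl u
      have hvA : v ∉ A := huv
      have hsep : ∀ a ∈ A, ∀ b ∈ Aᶜ, ¬G.Adj a b := by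
        intro a ha b hb hadj
        exact hb (ha.trans hadj.reachable)
      have hcA : Fintype.card ↥A < n := hn ▸ Fintype.card_subtype_lt (x := v) hvA
      have hcB : Fintype.card ↥(Aᶜ) < n :=
        hn ▸ Fintype.card_subtype_lt (x := u) (by simp [huA])
      have colA := ih _ hcA ↥A (G.induce A) rfl (isCograph_induce hG A)
      have colB := ih _ hcB ↥(Aᶜ) (G.induce Aᶜ) rfl (isCograph_induce hG Aᶜ)
      have hmax : G.Colorable (max (G.induce A).cliqueNum (G.induce Aᶜ).cliqueNum) :=
        union_colorable hsep (colA.mono (le_max_left _ _)) (colB.mono (le_max_right _ _))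
      exact hmax.mono (max_le (cliqueNum_induce_le G A) (cliqueNum_induce_le G Aᶜ))
    · -- Gᶜ disconnected: G is a join
      simp only [Preconnected, not_forall] at hd
      obtain ⟨u, v, huv⟩ := hd
      set A : Set α := {w | Gᶜ.Reachable u w} with hA
      have huA : u ∈ A := Reachable.refl u
      have hvA : v ∉ A := huv
      have hall : ∀ a ∈ A, ∀ b ∈ Aᶜ, G.Adj a b := by
        intro a ha b hb
        have hne : a ≠ b := fun h => hb (h ▸ ha)
        by_contra hadj
        exact hb (ha.trans (Adj.reachable ((G.compl_adj a b).mpr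
          ⟨hne, hadj⟩ : Gᶜ.Adj a b)))
      have hcA : Fintype.card ↥A < n := hn ▸ Fintype.card_subtype_lt (x := v) hvA
      have hcB : Fintype.card ↥(Aᶜ) < n :=
        hn ▸ Fintype.card_subtype_lt (x := u) (by simp [huA])
      have colA := ih _ hcA ↥A (G.induce A) rfl (isCograph_induce hG A)
      have colB := ih _ hcB ↥(Aᶜ) (G.induce Aᶜ) rfl (isCograph_induce hG Aᶜ)
      exact (join_colorable colA colB).mono (join_cliqueNum_le hall)

lemma chi_eq_omega {α : Type u} [Fintype α] (G : SimpleGraph α) (hG : G.IsCograph) :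
    (G.cliqueNum : ℕ∞) = G.chromaticNumber :=
  le_antisymm (cliqueNum_cast_le_chromaticNumber G)
    ((key (Fintype.card α) α G rfl hG).chromaticNumber_le)

end CographPerfectAux

/-- Every finite cograph satisfies `χ = ω`, and (since cographs are hereditary) so does
every induced subgraph: cographs are perfect. -/
theorem cograph_perfect {α : Type*} [Fintype α] (G : SimpleGraph α) (hG : G.IsCograph) :
    (G.cliqueNum : ℕ∞) = G.chromaticNumber ∧
    ∀ s : Set α, ((G.induce s).cliqueNum : ℕ∞) = (G.induce s).chromaticNumber := by
  classical
  refine ⟨CographPerfectAux.chi_eq_omega G hG, fun s => ?_⟩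
  have : Fintype ↥s := Fintype.ofFinite ↥s
  exact CographPerfectAux.chi_eq_omega (G.induce s) (CographPerfectAux.isCograph_induce hG s)
end

section
/- Let G and H be finite cographs with H nonempty. Then there exists a graph homomorphism from G to H if and only if ω(G) ≤ ω(H). -/
open Finset

/-- Key lemma: in a P₄-free graph, a clique and an independent set that "dominate"
each other must intersect (here phrased: they cannot be disjoint and nonempty). -/
lemma cograph_key {α : Type*} [DecidableEq α] (G : SimpleGraph α) (hG : G.IsCograph)
    (K I : Finset α)
    (hK : G.IsClique K)
    (hI : ∀ x ∈ I, ∀ y ∈ I, ¬ G.Adj x y)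
    (hdisj : ∀ x ∈ K, x ∉ I)
    (hnbI : ∀ u ∈ K, ∃ b ∈ I, G.Adj u b)
    (hnonnbK : ∀ a ∈ I, ∃ u ∈ K, ¬ G.Adj a u)
    (hKne : K.Nonempty) : False := by
  classical
  -- I is nonempty
  obtain ⟨u₀, hu₀⟩ := hKne
  obtain ⟨b₀, hb₀I, _⟩ := hnbI u₀ hu₀
  have hIne : I.Nonempty := ⟨b₀, hb₀I⟩
  -- choose a ∈ I maximizing number of neighbors in K
  obtain ⟨a, haI, hamax⟩ := Finset.exists_max_image I (fun x => (K.filter (G.Adj x ·)).card) hIne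
  obtain ⟨u, huK, hau⟩ := hnonnbK a haI
  obtain ⟨b, hbI, hub⟩ := hnbI u huK
  have hba : b ≠ a := by rintro rfl; exact hau hub.symm
  set A := K.filter (G.Adj a ·) with hA
  set B := K.filter (G.Adj b ·) with hB
  have huB : u ∈ B := Finset.mem_filter.mpr ⟨huK, hub.symm⟩
  have huA : u ∉ A := fun h => hau (Finset.mem_filter.mp h).2
  have hAB : ∃ v ∈ A, v ∉ B := by
    by_contra h
    push_neg at h
    have hsub : A ⊆ B := fun x hx => h x hx
    have : A.card < B.card := Finset.card_lt_card ⟨hsub, fun h2 => huA (h2 huB)⟩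
    have hmb : B.card ≤ A.card := hamax b hbI
    omega
  obtain ⟨v, hvA, hvB⟩ := hAB
  have hvK : v ∈ K := (Finset.mem_filter.mp hvA).1
  have hav : G.Adj a v := (Finset.mem_filter.mp hvA).2
  have hbv : ¬ G.Adj b v := fun h => hvB (Finset.mem_filter.mpr ⟨hvK, h⟩)
  have hvu : v ≠ u := fun h => huA (h ▸ hvA)
  have hvuadj : G.Adj v u := hK hvK huK hvu
  have hab : ¬ G.Adj a b := hI a haI b hbI
  -- the path a - v - u - b is an induced P₄
  have haK : a ∉ K := fun h => hdisj a h haI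
  have hbK : b ∉ K := fun h => hdisj b h hbI
  have hvI : v ∉ I := hdisj v hvK
  have huI : u ∉ I := hdisj u huK
  have hav' : a ≠ v := fun h => hvI (h ▸ haI)
  have hau' : a ≠ u := fun h => huI (h ▸ haI)
  have hbv' : b ≠ v := fun h => hvI (h ▸ hbI)
  have hbu' : b ≠ u := fun h => huI (h ▸ hbI)
  have hab' : a ≠ b := fun h => hba h.symm
  have hva : v ≠ a := hav'.symm
  have hua : u ≠ a := hau'.symm
  have hvb2 : v ≠ b := hbv'.symm
  have hub2 : u ≠ b := hbu'.symm
  have huv : u ≠ v := hvu.symm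
  let f : Fin 4 → α := ![a, v, u, b]
  have hinj : Function.Injective f := by
    intro x y hxy
    fin_cases x <;> fin_cases y <;> simp_all [f]
  refine hG.false ⟨⟨f, hinj⟩, ?_⟩
  intro x y
  have hau2 : ¬ G.Adj u a := fun h => hau h.symm
  have hvb : ¬ G.Adj v b := fun h => hbv h.symm
  have hba2 : ¬ G.Adj b a := fun h => hab h.symm
  fin_cases x <;> fin_cases y <;>
    simp [f, SimpleGraph.pathGraph_adj, hav, hav.symm, hvuadj, hvuadj.symm, hub, hub.symm,
      hau, hau2, hab, hba2, hbv, hvb, G.irrefl] <;> decide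

/-- Coloring lemma: a P₄-free graph whose cliques inside `s` have size at most `n`
admits a proper coloring of `s` with `n` colors. -/
lemma cograph_coloring {α : Type*} [DecidableEq α] (G : SimpleGraph α) (hG : G.IsCograph) :
    ∀ n : ℕ, ∀ s : Finset α, (∀ t ⊆ s, G.IsClique t → t.card ≤ n) →
      ∃ f : α → ℕ, (∀ x ∈ s, f x < n) ∧
        (∀ x ∈ s, ∀ y ∈ s, G.Adj x y → f x ≠ f y) := by
  classical
  intro n
  induction n with
  | zero =>
    intro s hs
    refine ⟨fun _ => 0, fun x hx => ?_, fun x hx y _ _ _ => ?_⟩ <;>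
    · have := hs {x} (by simpa using hx) (by simp [SimpleGraph.isClique_singleton])
      simp at this
  | succ n ih =>
    intro s hs
    -- pick a maximum-cardinality independent subset I of s
    have hSfin : {I : Finset α | I ⊆ s ∧ ∀ x ∈ I, ∀ y ∈ I, ¬ G.Adj x y}.Finite := by
      apply Set.Finite.subset (s.powerset.finite_toSet)
      intro I hI
      exact Finset.mem_coe.mpr (Finset.mem_powerset.mpr hI.1)
    obtain ⟨I, hImem, hImax⟩ := Set.Finite.exists_maximalFor Finset.card _ hSfin
      ⟨∅, Finset.empty_subset s, by simp⟩
    obtain ⟨hIs, hIind⟩ := hImem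
    -- maximality consequence: every vertex of s outside I has a neighbor in I
    have hdom : ∀ u ∈ s, u ∉ I → ∃ b ∈ I, G.Adj u b := by
      intro u hus huI
      by_contra h
      push_neg at h
      have hind : ∀ x ∈ insert u I, ∀ y ∈ insert u I, ¬ G.Adj x y := by
        intro x hx y hy
        rcases Finset.mem_insert.mp hx with hxu | hxI <;>
          rcases Finset.mem_insert.mp hy with hyu | hyI
        · intro hadj; rw [hxu, hyu] at hadj; exact G.loopless.irrefl u hadj
        · intro hadj; rw [hxu] at hadj; exact h y hyI hadj
        · intro hadj; rw [hyu] at hadj; exact h x hxI hadj.symm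
        · exact hIind x hxI y hyI
      have hmem : insert u I ∈ {I : Finset α | I ⊆ s ∧ ∀ x ∈ I, ∀ y ∈ I, ¬ G.Adj x y} :=
        ⟨Finset.insert_subset hus hIs, hind⟩
      have hle : I.card ≤ (insert u I).card := Finset.card_le_card (Finset.subset_insert u I)
      have := hImax hmem hle
      rw [Finset.card_insert_of_notMem huI] at this
      omega
    -- cliques in s \ I have size at most n
    have hs' : ∀ t ⊆ s \ I, G.IsClique t → t.card ≤ n := by
      intro t hts htc
      by_contra hcard
      push_neg at hcard
      have hts2 : t ⊆ s := hts.trans (Finset.sdiff_subset)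
      have hle : t.card ≤ n + 1 := hs t hts2 htc
      have hdisj : ∀ x ∈ t, x ∉ I := fun x hx =>
        (Finset.mem_sdiff.mp (hts hx)).2
      refine cograph_key G hG t I htc hIind hdisj
        (fun u hu => hdom u (hts2 hu) (hdisj u hu)) ?_ ?_
      · -- every a ∈ I has a non-neighbor in t
        intro a haI
        by_contra h
        push_neg at h
        have hat : a ∉ t := fun hat => hdisj a hat haI
        have hclique : G.IsClique (insert a t : Finset α) := by
          rw [Finset.coe_insert]
          exact htc.insert (fun b hb hne => h b hb)
        have := hs (insert a t) (Finset.insert_subset (hIs haI) hts2) hclique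
        rw [Finset.card_insert_of_notMem hat] at this
        omega
      · exact Finset.card_pos.mp (by omega)
    obtain ⟨f, hf1, hf2⟩ := ih (s \ I) hs'
    refine ⟨fun x => if x ∈ I then n else f x, ?_, ?_⟩
    · intro x hx
      by_cases hxI : x ∈ I
      · simp [hxI]
      · have := hf1 x (Finset.mem_sdiff.mpr ⟨hx, hxI⟩)
        simp [hxI]; omega
    · intro x hx y hy hadj
      by_cases hxI : x ∈ I <;> by_cases hyI : y ∈ I
      · exact absurd hadj (hIind x hxI y hyI)
      · have := hf1 y (Finset.mem_sdiff.mpr ⟨hy, hyI⟩)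
        simp [hxI, hyI]; omega
      · have := hf1 x (Finset.mem_sdiff.mpr ⟨hx, hxI⟩)
        simp [hxI, hyI]; omega
      · simp only [hxI, hyI, if_neg, ite_false]
        exact hf2 x (Finset.mem_sdiff.mpr ⟨hx, hxI⟩) y (Finset.mem_sdiff.mpr ⟨hy, hyI⟩) hadj

/-- Let `G` and `H` be finite cographs with `H` nonempty. Then there is a graph
homomorphism from `G` to `H` if and only if `ω(G) ≤ ω(H)`. -/
theorem cograph_hom_iff_cliqueNum_le {α β : Type*} [Fintype α] [Fintype β] [Nonempty β]
    (G : SimpleGraph α) (H : SimpleGraph β) (hG : G.IsCograph) (hH : H.IsCograph) :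
    Nonempty (G →g H) ↔ G.cliqueNum ≤ H.cliqueNum := by
  classical
  constructor
  · rintro ⟨φ⟩
    obtain ⟨t, ht⟩ := G.exists_isNClique_cliqueNum
    have hinjOn : Set.InjOn φ ↑t := by
      intro x hx y hy hxy
      by_contra hne
      exact (H.ne_of_adj (φ.map_adj (ht.isClique hx hy hne))) hxy
    have hclique : H.IsClique (t.image φ) := by
      intro x hx y hy hxy
      obtain ⟨x', hx', rfl⟩ := Finset.mem_image.mp hx
      obtain ⟨y', hy', rfl⟩ := Finset.mem_image.mp hy
      exact φ.map_adj (ht.isClique hx' hy' (fun h => hxy (by rw [h])))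
    have hcard : (t.image φ).card = t.card := Finset.card_image_of_injOn hinjOn
    calc G.cliqueNum = t.card := ht.card_eq.symm
      _ = (t.image φ).card := hcard.symm
      _ ≤ H.cliqueNum := SimpleGraph.IsClique.card_le_cliqueNum (tc := hclique)
  · intro hle
    cases isEmpty_or_nonempty α with
    | inl h => exact ⟨⟨fun x => isEmptyElim x, fun {x} => isEmptyElim x⟩⟩
    | inr h =>
      obtain ⟨f, hf1, hf2⟩ := cograph_coloring G hG G.cliqueNum Finset.univ
        (fun t _ htc => SimpleGraph.IsClique.card_le_cliqueNum (tc := htc))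
      obtain ⟨t, ht⟩ := H.exists_isNClique_cliqueNum
      have hcard : t.card = H.cliqueNum := ht.card_eq
      have hflt : ∀ x : α, f x < t.card := fun x => by
        have := hf1 x (Finset.mem_univ x)
        omega
      let e := t.equivFin
      let φ : α → β := fun x => (e.symm ⟨f x, hflt x⟩ : β)
      refine ⟨⟨φ, ?_⟩⟩
      intro x y hadj
      have hne : f x ≠ f y := hf2 x (Finset.mem_univ x) y (Finset.mem_univ y) hadj
      have hmemx : φ x ∈ t := (e.symm ⟨f x, hflt x⟩).2
      have hmemy : φ y ∈ t := (e.symm ⟨f y, hflt y⟩).2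
      refine ht.isClique hmemx hmemy ?_
      intro heq
      apply hne
      have h1 : e.symm ⟨f x, hflt x⟩ = e.symm ⟨f y, hflt y⟩ := Subtype.ext heq
      have h2 : (⟨f x, hflt x⟩ : Fin t.card) = ⟨f y, hflt y⟩ := e.symm.injective h1
      exact congrArg Fin.val h2
end

section
/- Let G and H be finite cographs, let G be connected, and suppose H is a retract of G. Then H is connected, and if C_1, …, C_t are the cocomponents of G, there exists a partition of the set of cocomponents of H into t nonempty parts P_1, …, P_t such that, for each i ∈ {1,…,t}, the subgraph of H induced by the union of the cocomponents in P_i is a retract of the subgraph of G induced by C_i. -/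
/-- `H` is a retract of `G`: there are homomorphisms `ρ : G → H` (retraction) and
`γ : H → G` (co-retraction) with `ρ ∘ γ = id`. -/
def SimpleGraph.IsRetract {α β : Type*} (G : SimpleGraph α) (H : SimpleGraph β) : Prop :=
  ∃ (ρ : G →g H) (γ : H →g G), ∀ v, ρ (γ v) = v

/-- Let `G` and `H` be finite cographs with `G` connected, and suppose `H` is a retract of `G`.
Then `H` is connected, and there is a partition of the cocomponents of `H` (encoded by a
surjective map `P` from the cocomponents of `H`, i.e. the connected components of `Hᶜ`, onto
the cocomponents of `G`: the parts are the fibres of `P`, nonempty by surjectivity) such that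
for each cocomponent `C` of `G`, the subgraph of `H` induced by the union of the cocomponents
in the part assigned to `C` is a retract of the subgraph of `G` induced by `C`. -/
theorem connected_cograph_retract_cocomponents {α β : Type*} [Fintype α] [Fintype β]
    (G : SimpleGraph α) (H : SimpleGraph β) (hG : G.IsCograph) (hH : H.IsCograph)
    (hGc : G.Connected) (h : G.IsRetract H) :
    H.Connected ∧
    ∃ P : Hᶜ.ConnectedComponent → Gᶜ.ConnectedComponent,
      Function.Surjective P ∧
      ∀ C : Gᶜ.ConnectedComponent,
        (G.induce C.supp).IsRetract
          (H.induce {w : β | P (Hᶜ.connectedComponentMk w) = C}) := by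
  obtain ⟨ρ, γ, hργ⟩ := h
  have hγinj : Function.Injective γ := fun a b hab => by
    rw [← hργ a, ← hργ b, hab]
  -- H is connected
  have hβ : Nonempty β := Nonempty.map ρ hGc.nonempty
  have hHc : H.Connected := by
    refine ⟨fun u v => ?_⟩
    have := (hGc.preconnected (γ u) (γ v)).map ρ
    rwa [hργ, hργ] at this
  refine ⟨hHc, ?_⟩
  -- γ is also a homomorphism between the complements
  have hγc : ∀ {a b : β}, Hᶜ.Adj a b → Gᶜ.Adj (γ a) (γ b) := by
    intro a b hab
    rw [SimpleGraph.compl_adj] at hab ⊢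
    refine ⟨fun h' => hab.1 (hγinj h'), fun h' => hab.2 ?_⟩
    have := ρ.map_adj h'
    rwa [hργ, hργ] at this
  let γ' : Hᶜ →g Gᶜ := ⟨γ, hγc⟩
  -- key fact: `γ (ρ x)` is in the same cocomponent of `G` as `x`
  have key : ∀ x : α, Gᶜ.connectedComponentMk (γ (ρ x)) = Gᶜ.connectedComponentMk x := by
    intro x
    by_contra hne
    have hadj : G.Adj x (γ (ρ x)) := by
      by_contra hnadj
      have hxne : x ≠ γ (ρ x) := fun h' => hne (by rw [← h'])
      exact hne (SimpleGraph.ConnectedComponent.sound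
        (((G.compl_adj (γ (ρ x)) x).2 ⟨fun h' => hxne h'.symm, fun h' => hnadj h'.symm⟩).reachable))
    have := ρ.map_adj hadj
    rw [hργ] at this
    exact H.irrefl this
  refine ⟨SimpleGraph.ConnectedComponent.map γ', ?_, ?_⟩
  · -- surjectivity
    intro C
    refine SimpleGraph.ConnectedComponent.ind (fun x => ?_) C
    exact ⟨Hᶜ.connectedComponentMk (ρ x), key x⟩
  · intro C
    refine ⟨⟨fun x => ⟨ρ x.1, ?_⟩, ?_⟩, ⟨fun w => ⟨γ w.1, ?_⟩, ?_⟩, ?_⟩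
    · -- ρ maps C.supp into the fibre
      show (SimpleGraph.ConnectedComponent.map γ') (Hᶜ.connectedComponentMk (ρ x.1)) = C
      have hx := (SimpleGraph.ConnectedComponent.mem_supp_iff C x.1).1 x.2
      rw [SimpleGraph.ConnectedComponent.map_mk]
      exact (key x.1).trans hx
    · intro a b hab
      exact ρ.map_adj hab
    · -- γ maps the fibre into C.supp
      have hw : (SimpleGraph.ConnectedComponent.map γ') (Hᶜ.connectedComponentMk w.1) = C := w.2
      rw [SimpleGraph.ConnectedComponent.mem_supp_iff]
      simpa [γ'] using hw
    · intro a b hab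
      exact γ.map_adj hab
    · intro w
      exact Subtype.ext (hργ w.1)
end

section
/- If H is a retract of a graph G, then G and H have the same odd girth, i.e., the infimum (in ℕ∞) of the set of odd lengths of cycles in G equals the infimum of the set of odd lengths of cycles in H. -/
open SimpleGraph Walk

/-- A closed walk with no duplicate vertices in its support is nil. -/
lemma closed_nodup_nil {α : Type*} {G : SimpleGraph α} {v : α} (q : G.Walk v v)
    (h : q.support.Nodup) : q.Nil := by
  cases q with
  | nil => exact Walk.nil_nil
  | cons h' r =>
    exfalso
    simp only [Walk.support_cons, List.nodup_cons] at h
    exact h.1 r.end_mem_support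

/-- In a walk with nodup support, no dart starts at the final vertex. -/
lemma dart_fst_ne_end {α : Type*} {G : SimpleGraph α} {u v : α} {p : G.Walk u v}
    (hp : p.support.Nodup) {d : G.Dart} (hd : d ∈ p.darts) : d.fst ≠ v := by
  intro hfst
  have h1 : d.fst ∈ p.darts.map (·.fst) := List.mem_map_of_mem hd
  rw [Walk.map_fst_darts] at h1
  have h2 : p.support.dropLast ++ [v] = p.support := by
    conv_rhs => rw [← List.dropLast_append_getLast (p.support_ne_nil), p.getLast_support]
  rw [← h2] at hp
  have := (List.nodup_append'.mp hp).2.2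
  exact this (hfst ▸ h1) (List.mem_singleton_self v)

/-- If a path from `u` to `v` contains the edge `s(v, u)`, then it has length 1. -/
lemma length_eq_one_of_mem_edges {α : Type*} {G : SimpleGraph α} {u v : α} {p : G.Walk u v}
    (hp : p.support.Nodup) (he : s(v, u) ∈ p.edges) : p.length = 1 := by
  obtain ⟨d, hd, hde⟩ := List.mem_map.mp he
  rw [show d.edge = s(d.fst, d.snd) from rfl, Sym2.eq_iff] at hde
  rcases hde with ⟨h1, h2⟩ | ⟨h1, h2⟩
  · exact absurd h1 (dart_fst_ne_end hp hd)
  · -- d.fst = u, d.snd = v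
    cases p with
    | nil => simp at hd
    | @cons _ y _ h' q =>
      simp only [Walk.support_cons, List.nodup_cons] at hp
      rw [Walk.darts_cons, List.mem_cons] at hd
      rcases hd with rfl | hd
      · -- first dart, so y = v (from h2) and q : Walk v v with nodup support
        simp only at h2
        subst h2
        have := closed_nodup_nil q hp.2
        rw [Walk.length_cons, Walk.nil_iff_length_eq.mp this]
      · exact absurd (h1 ▸ Walk.dart_fst_mem_support_of_mem_darts q hd) hp.1

/-- From an odd closed walk one can extract an odd cycle of length at most the walk's length. -/
lemma exists_odd_cycle {α : Type*} {G : SimpleGraph α} :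
    ∀ n : ℕ, ∀ (v : α) (w : G.Walk v v), w.length = n → Odd n →
      ∃ (x : α) (c : G.Walk x x), c.IsCycle ∧ Odd c.length ∧ c.length ≤ n := by
  intro n
  induction n using Nat.strong_induction_on with
  | _ n IH =>
    intro v w hlen hodd
    classical
    cases w with
    | nil =>
      simp only [Walk.length_nil] at hlen
      subst hlen
      exact absurd hodd (by simp)
    | @cons _ u _ h p =>
      rw [Walk.length_cons] at hlen
      by_cases hnd : p.support.Nodup
      · have hpath : p.IsPath := Walk.IsPath.mk' hnd
        by_cases he : s(v, u) ∈ p.edges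
        · exfalso
          have := length_eq_one_of_mem_edges hnd he
          rw [Nat.odd_iff] at hodd
          omega
        · refine ⟨v, Walk.cons h p, ?_, ?_, ?_⟩
          · exact (Walk.cons_isCycle_iff p h).mpr ⟨hpath, he⟩
          · rw [Walk.length_cons, hlen]; exact hodd
          · rw [Walk.length_cons, hlen]
      · obtain ⟨x, hxdup⟩ := List.exists_duplicate_iff_not_nodup.mpr hnd
        have hx : x ∈ p.support := hxdup.mem
        have hcount : 2 ≤ p.support.count x := List.duplicate_iff_two_le_count.mp hxdup
        have hspec := p.take_spec hx
        have hcount1 : (p.takeUntil x hx).support.count x = 1 :=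
          p.count_support_takeUntil_eq_one hx
        have hsupp : p.support = (p.takeUntil x hx).support ++ (p.dropUntil x hx).support.tail := by
          conv_lhs => rw [← hspec]
          exact Walk.support_append _ _
        have hxtail : x ∈ (p.dropUntil x hx).support.tail := by
          by_contra hxt
          rw [hsupp, List.count_append, hcount1, List.count_eq_zero_of_not_mem hxt] at hcount
          omega
        set r := p.dropUntil x hx with hr
        cases hrc : r with
        | nil => rw [hrc] at hxtail; simp at hxtail
        | @cons _ y _ h2 r2 =>
          rw [hrc] at hxtail
          simp only [Walk.support_cons, List.tail_cons] at hxtail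
          have hx2 : x ∈ r2.support := hxtail
          -- two closed walks
          set c1 : G.Walk x x := Walk.cons h2 (r2.takeUntil x hx2) with hc1
          set c2 : G.Walk x x :=
            (r2.dropUntil x hx2).append (Walk.cons h (p.takeUntil x hx)) with hc2
          have hlen2 : (r2.takeUntil x hx2).length + (r2.dropUntil x hx2).length = r2.length := by
            conv_rhs => rw [← r2.take_spec hx2]
            rw [Walk.length_append]
          have hlenp : (p.takeUntil x hx).length + r.length = p.length := by
            conv_rhs => rw [← hspec]
            rw [Walk.length_append]
          have hrlen : r.length = r2.length + 1 := by rw [hrc, Walk.length_cons]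
          have hsum : c1.length + c2.length = n := by
            rw [hc1, hc2, Walk.length_cons, Walk.length_append, Walk.length_cons]
            omega
          have hc1pos : 0 < c1.length := by rw [hc1, Walk.length_cons]; omega
          have hc2pos : 0 < c2.length := by
            rw [hc2, Walk.length_append, Walk.length_cons]; omega
          have : Odd c1.length ∨ Odd c2.length := by
            rcases Nat.even_or_odd c1.length with h1 | h1
            · right
              rcases Nat.even_or_odd c2.length with h2' | h2'
              · exfalso; rw [Nat.odd_iff] at hodd
                rw [Nat.even_iff] at h1 h2'
                omega
              · exact h2'
            · left; exact h1
          rcases this with hoddc | hoddc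
          · obtain ⟨x', c', hc', hoc', hlc'⟩ :=
              IH c1.length (by omega) x c1 rfl hoddc
            exact ⟨x', c', hc', hoc', by omega⟩
          · obtain ⟨x', c', hc', hoc', hlc'⟩ :=
              IH c2.length (by omega) x c2 rfl hoddc
            exact ⟨x', c', hc', hoc', by omega⟩

/-- The odd girth of a graph: the infimum in `ℕ∞` of the odd lengths of cycles. -/
noncomputable def SimpleGraph.oddGirth {α : Type*} (G : SimpleGraph α) : ℕ∞ :=
  sInf {n : ℕ∞ | ∃ (v : α) (w : G.Walk v v), w.IsCycle ∧ Odd w.length ∧ (w.length : ℕ∞) = n}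

/-- If `H` is a retract of `G`, then `G` and `H` have the same odd girth. -/
theorem retract_oddGirth {α β : Type*} (G : SimpleGraph α) (H : SimpleGraph β)
    (h : G.IsRetract H) : G.oddGirth = H.oddGirth := by
  obtain ⟨ρ, γ, hργ⟩ := h
  have hγinj : Function.Injective γ := Function.LeftInverse.injective hργ
  apply le_antisymm
  · -- cycles in H lift to cycles in G via γ
    apply sInf_le_sInf
    rintro n ⟨v, w, hcyc, hoddw, hlen⟩
    exact ⟨γ v, w.map γ, hcyc.map hγinj, by rwa [Walk.length_map],
      by rwa [Walk.length_map]⟩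
  · -- a cycle in G maps to an odd closed walk in H, which contains an odd cycle
    apply le_sInf
    rintro n ⟨v, w, hcyc, hoddw, hlen⟩
    obtain ⟨x, c, hc, hoc, hlc⟩ :=
      exists_odd_cycle (w.map ρ).length (ρ v) (w.map ρ) rfl
        (by rwa [Walk.length_map])
    calc sInf {m : ℕ∞ | ∃ (v : β) (w : H.Walk v v), w.IsCycle ∧ Odd w.length ∧ (w.length : ℕ∞) = m}
        ≤ (c.length : ℕ∞) := sInf_le ⟨x, c, hc, hoc, rfl⟩
      _ ≤ n := by
          rw [← hlen]
          have : (w.map ρ).length = w.length := Walk.length_map ρ w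
          exact_mod_cast this ▸ hlc
end

section
/- Let H be a finite connected cograph. Then H is a retract of every finite cograph G that contains H as an induced subgraph and satisfies ω(G) = ω(H), if and only if every vertex of H is contained in a clique of H of cardinality ω(H). -/
open Finset

namespace AR

section PatternLemmas


variable {α : Type*}

/-- Pattern form of `P₄`-freeness. -/
def P4F (G : SimpleGraph α) : Prop :=
  ∀ a b c d : α, G.Adj a b → G.Adj b c → G.Adj c d →
    ¬G.Adj a c → ¬G.Adj a d → ¬G.Adj b d → False

lemma pattern_ne {G : SimpleGraph α} {a b c d : α}
    (hab : G.Adj a b) (hbc : G.Adj b c) (hcd : G.Adj c d)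
    (hac : ¬G.Adj a c) (had : ¬G.Adj a d) (hbd : ¬G.Adj b d) :
    a ≠ b ∧ a ≠ c ∧ a ≠ d ∧ b ≠ c ∧ b ≠ d ∧ c ≠ d := by
  refine ⟨hab.ne, ?_, ?_, hbc.ne, ?_, hcd.ne⟩
  · rintro rfl; exact had hcd
  · rintro rfl; exact hac hcd.symm
  · rintro rfl; exact had hab

lemma emb_of_pattern {G : SimpleGraph α} {a b c d : α}
    (hab : G.Adj a b) (hbc : G.Adj b c) (hcd : G.Adj c d)
    (hac : ¬G.Adj a c) (had : ¬G.Adj a d) (hbd : ¬G.Adj b d) :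
    Nonempty (SimpleGraph.pathGraph 4 ↪g G) := by
  obtain ⟨n1, n2, n3, n4, n5, n6⟩ := pattern_ne hab hbc hcd hac had hbd
  have hba := hab.symm
  have hcb := hbc.symm
  have hdc := hcd.symm
  have hca : ¬G.Adj c a := fun h => hac h.symm
  have hda : ¬G.Adj d a := fun h => had h.symm
  have hdb : ¬G.Adj d b := fun h => hbd h.symm
  have hia : ¬G.Adj a a := G.loopless.irrefl a
  have hib : ¬G.Adj b b := G.loopless.irrefl b
  have hic : ¬G.Adj c c := G.loopless.irrefl c
  have hid : ¬G.Adj d d := G.loopless.irrefl d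
  refine ⟨⟨⟨![a, b, c, d], ?_⟩, ?_⟩⟩
  · intro i j hij
    fin_cases i <;> fin_cases j <;> first | rfl | (exfalso; simp_all)
  · intro i j
    fin_cases i <;> fin_cases j <;> simp only [Matrix.cons_val_zero, Matrix.cons_val_one,
        Matrix.head_cons, Matrix.cons_val_two, Matrix.tail_cons, Matrix.cons_val_three,
        Matrix.head_fin_const, Matrix.cons_val_fin_one, Fin.mk_zero, Fin.mk_one] <;>
      rw [SimpleGraph.pathGraph_adj] <;>
      first
        | (refine iff_of_true ?_ (by decide); assumption)
        | (refine iff_of_false ?_ (by decide); assumption)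

lemma p4f_of_isCograph {G : SimpleGraph α} (h : G.IsCograph) : P4F G := by
  intro a b c d hab hbc hcd hac had hbd
  obtain ⟨e⟩ := emb_of_pattern hab hbc hcd hac had hbd
  exact h.false e

lemma isCograph_of_p4f {G : SimpleGraph α} (h : P4F G) : G.IsCograph := by
  constructor
  intro e
  have adj : ∀ i j : Fin 4, (SimpleGraph.pathGraph 4).Adj i j → G.Adj (e i) (e j) :=
    fun i j hij => e.map_rel_iff.mpr hij
  have nadj : ∀ i j : Fin 4, ¬(SimpleGraph.pathGraph 4).Adj i j → ¬G.Adj (e i) (e j) :=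
    fun i j hij h' => hij (e.map_rel_iff.mp h')
  have p4adj : ∀ i j : Fin 4, (SimpleGraph.pathGraph 4).Adj i j ↔
      (i.val + 1 = j.val ∨ j.val + 1 = i.val) := fun i j => SimpleGraph.pathGraph_adj
  exact h (e 0) (e 1) (e 2) (e 3)
    (adj 0 1 (by rw [p4adj]; decide)) (adj 1 2 (by rw [p4adj]; decide))
    (adj 2 3 (by rw [p4adj]; decide)) (nadj 0 2 (by rw [p4adj]; decide))
    (nadj 0 3 (by rw [p4adj]; decide)) (nadj 1 3 (by rw [p4adj]; decide))

lemma P4F.compl {G : SimpleGraph α} (h : P4F G) : P4F Gᶜ := by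
  intro a b c d hab hbc hcd hac had hbd
  obtain ⟨n1, n2, n3, n4, n5, n6⟩ := pattern_ne hab hbc hcd hac had hbd
  rw [SimpleGraph.compl_adj, not_and, not_not] at hac had hbd
  exact h b d a c (hbd n5) ((had n3).symm) (hac n2)
    (fun h' => hab.2 h'.symm) (fun h' => hbc.2 h') (fun h' => hcd.2 h'.symm)


end PatternLemmas

section Seinsche
variable {α : Type*} [DecidableEq α]


/-- One step of Seinsche's argument. -/
lemma step {G : SimpleGraph α} (hG : P4F G) {x : α} {s1 s2 : Finset α}
    (hx1 : x ∉ s1) (hx2 : x ∉ s2) (hd : Disjoint s1 s2)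
    (hn1 : s1.Nonempty) (hn2 : s2.Nonempty)
    (hcross : ∀ a ∈ s1, ∀ b ∈ s2, ¬G.Adj a b) :
    ∃ t1 t2 : Finset α, t1 ∪ t2 = insert x (s1 ∪ s2) ∧ Disjoint t1 t2 ∧
      t1.Nonempty ∧ t2.Nonempty ∧
      ((∀ a ∈ t1, ∀ b ∈ t2, ¬G.Adj a b) ∨ (∀ a ∈ t1, ∀ b ∈ t2, G.Adj a b)) := by
  classical
  by_cases hA : ∀ z ∈ s1, ¬G.Adj x z
  · refine ⟨s1, insert x s2, by rw [Finset.union_insert], ?_, hn1, insert_nonempty _ _, ?_⟩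
    · rw [Finset.disjoint_insert_right]; exact ⟨hx1, hd⟩
    · left
      intro a ha b hb
      rcases Finset.mem_insert.mp hb with rfl | hb
      · exact fun h' => hA a ha h'.symm
      · exact hcross a ha b hb
  by_cases hB : ∀ z ∈ s2, ¬G.Adj x z
  · refine ⟨insert x s1, s2, by rw [Finset.insert_union], ?_, insert_nonempty _ _, hn2, ?_⟩
    · rw [Finset.disjoint_insert_left]; exact ⟨hx2, hd⟩
    · left
      intro a ha b hb
      rcases Finset.mem_insert.mp ha with rfl | ha
      · exact hB b hb
      · exact hcross a ha b hb
  by_cases hC : ∀ z ∈ s1 ∪ s2, G.Adj x z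
  · refine ⟨{x}, s1 ∪ s2, ?_, ?_, singleton_nonempty _, hn1.mono Finset.subset_union_left, ?_⟩
    · rw [← Finset.insert_eq]
    · simp only [Finset.disjoint_singleton_left, Finset.mem_union]
      rintro (h | h) <;> [exact hx1 h; exact hx2 h]
    · right
      intro a ha b hb
      rw [Finset.mem_singleton] at ha
      subst ha
      exact hC b hb
  push_neg at hA hB hC
  obtain ⟨a1, ha1, hxa1⟩ := hA
  obtain ⟨a2, ha2, hxa2⟩ := hB
  obtain ⟨z, hz, hxz⟩ := hC
  by_cases hD1 : ∃ a ∈ s1, ∃ b ∈ s1, G.Adj a b ∧ G.Adj x a ∧ ¬G.Adj x b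
  · obtain ⟨a, ha, b, hb, hadj, hxa, hxb⟩ := hD1
    exact absurd (hG b a x a2 hadj.symm hxa.symm hxa2
      (fun h' => hxb h'.symm) (hcross b hb a2 ha2) (hcross a ha a2 ha2)) not_false
  by_cases hD2 : ∃ a ∈ s2, ∃ b ∈ s2, G.Adj a b ∧ G.Adj x a ∧ ¬G.Adj x b
  · obtain ⟨a, ha, b, hb, hadj, hxa, hxb⟩ := hD2
    exact absurd (hG b a x a1 hadj.symm hxa.symm hxa1
      (fun h' => hxb h'.symm) (fun h' => hcross a1 ha1 b hb h'.symm)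
      (fun h' => hcross a1 ha1 a ha h'.symm)) not_false
  push_neg at hD1 hD2
  refine ⟨(s1 ∪ s2).filter (fun z => ¬G.Adj x z),
    insert x ((s1 ∪ s2).filter (fun z => G.Adj x z)), ?_, ?_, ⟨z, Finset.mem_filter.mpr ⟨hz, hxz⟩⟩,
    insert_nonempty _ _, ?_⟩
  · rw [Finset.union_insert]
    congr 1
    rw [Finset.union_comm, Finset.filter_union_filter_not_eq (fun z => G.Adj x z)]
  · rw [Finset.disjoint_insert_right]
    constructor
    · simp only [Finset.mem_filter, Finset.mem_union]
      rintro ⟨h | h, -⟩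
      · exact hx1 h
      · exact hx2 h
    · rw [Finset.disjoint_left]
      intro a ha ha'
      exact (Finset.mem_filter.mp ha).2 (Finset.mem_filter.mp ha').2
  · left
    intro a ha b hb
    rw [Finset.mem_filter] at ha
    obtain ⟨ha, hna⟩ := ha
    rcases Finset.mem_insert.mp hb with rfl | hb
    · exact fun h' => hna h'.symm
    · rw [Finset.mem_filter] at hb
      obtain ⟨hb, hab⟩ := hb
      intro hadj
      rcases Finset.mem_union.mp ha with ha' | ha' <;> rcases Finset.mem_union.mp hb with hb' | hb'
      · exact hna (hD1 b hb' a ha' hadj.symm hab)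
      · exact hcross a ha' b hb' hadj
      · exact hcross b hb' a ha' hadj.symm
      · exact hna (hD2 b hb' a ha' hadj.symm hab)

/-- Seinsche's theorem, finset form. -/
lemma seinsche : ∀ (n : ℕ) {G : SimpleGraph α}, P4F G → ∀ t : Finset α, t.card = n → 2 ≤ n →
    ∃ t1 t2 : Finset α, t1 ∪ t2 = t ∧ Disjoint t1 t2 ∧ t1.Nonempty ∧ t2.Nonempty ∧
      ((∀ a ∈ t1, ∀ b ∈ t2, ¬G.Adj a b) ∨ (∀ a ∈ t1, ∀ b ∈ t2, G.Adj a b)) := by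
  intro n
  induction n using Nat.strong_induction_on with
  | _ n ih =>
    intro G hG t hcard h2
    rcases eq_or_lt_of_le h2 with h2' | h3
    · -- |t| = 2
      have ht2 : t.card = 2 := by omega
      obtain ⟨x, y, hxy, rfl⟩ := Finset.card_eq_two.mp ht2
      by_cases hadj : G.Adj x y
      · exact ⟨{x}, {y}, rfl, by simp [hxy, Ne.symm hxy], singleton_nonempty _, singleton_nonempty _,
          Or.inr (by simp [hadj])⟩
      · exact ⟨{x}, {y}, rfl, by simp [hxy, Ne.symm hxy], singleton_nonempty _, singleton_nonempty _,
          Or.inl (by simp [hadj])⟩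
    · -- |t| ≥ 3
      have hne : t.Nonempty := by
        rw [← Finset.card_pos, hcard]; omega
      obtain ⟨x, hx⟩ := hne
      have hins : t = insert x (t.erase x) := (Finset.insert_erase hx).symm
      have hcard' : (t.erase x).card = n - 1 := by rw [Finset.card_erase_of_mem hx, hcard]
      obtain ⟨s1, s2, hu, hd, hn1, hn2, hcr⟩ :=
        ih (n-1) (by omega) hG (t.erase x) hcard' (by omega)
      have hx1 : x ∉ s1 := fun h => (Finset.mem_erase.mp (hu ▸ Finset.mem_union_left s2 h)).1 rfl
      have hx2 : x ∉ s2 := fun h => (Finset.mem_erase.mp (hu ▸ Finset.mem_union_right s1 h)).1 rfl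
      rcases hcr with hcr | hcr
      · obtain ⟨t1, t2, hu', hd', hn1', hn2', hres⟩ := step hG hx1 hx2 hd hn1 hn2 hcr
        exact ⟨t1, t2, by rw [hu', hu, ← hins], hd', hn1', hn2', hres⟩
      · have hcrc : ∀ a ∈ s1, ∀ b ∈ s2, ¬Gᶜ.Adj a b := by
          intro a ha b hb h'
          exact h'.2 (hcr a ha b hb)
        obtain ⟨t1, t2, hu', hd', hn1', hn2', hres⟩ := step hG.compl hx1 hx2 hd hn1 hn2 hcrc
        refine ⟨t1, t2, by rw [hu', hu, ← hins], hd', hn1', hn2', ?_⟩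
        rcases hres with hres | hres
        · right
          intro a ha b hb
          have hne2 : a ≠ b := fun h => Finset.disjoint_left.mp hd' (h ▸ ha) hb
          by_contra hadj
          exact hres a ha b hb ⟨hne2, hadj⟩
        · left
          intro a ha b hb hadj
          exact (hres a ha b hb).2 hadj


end Seinsche

section CW
variable {α : Type*} [DecidableEq α]


open Classical in
/-- Largest size of a clique inside the finset `t`. -/
noncomputable def cw (G : SimpleGraph α) (t : Finset α) : ℕ :=
  (t.powerset.filter (fun s : Finset α => G.IsClique (s : Set α))).sup Finset.card

lemma le_cw {G : SimpleGraph α} {s t : Finset α} (hst : s ⊆ t) (hs : G.IsClique (s : Set α)) :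
    s.card ≤ cw G t := by
  classical
  refine Finset.le_sup ?_
  rw [Finset.mem_filter, Finset.mem_powerset]
  exact ⟨hst, by convert hs⟩

lemma cw_exists (G : SimpleGraph α) (t : Finset α) :
    ∃ s : Finset α, s ⊆ t ∧ G.IsClique (s : Set α) ∧ s.card = cw G t := by
  classical
  have hne : (t.powerset.filter (fun s : Finset α => G.IsClique (s : Set α))).Nonempty := by
    refine ⟨∅, ?_⟩
    rw [Finset.mem_filter, Finset.mem_powerset]
    exact ⟨Finset.empty_subset t, by simp⟩
  obtain ⟨s, hs, hsup⟩ := Finset.exists_mem_eq_sup _ hne Finset.card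
  rw [Finset.mem_filter, Finset.mem_powerset] at hs
  exact ⟨s, hs.1, by convert hs.2, by rw [cw]; convert hsup.symm⟩

lemma cw_mono {G : SimpleGraph α} {s t : Finset α} (hst : s ⊆ t) : cw G s ≤ cw G t := by
  obtain ⟨c, hc1, hc2, hc3⟩ := cw_exists G s
  rw [← hc3]
  exact le_cw (hc1.trans hst) hc2

lemma one_le_cw {G : SimpleGraph α} {t : Finset α} {x : α} (hx : x ∈ t) : 1 ≤ cw G t := by
  have := le_cw (G := G) (Finset.singleton_subset_iff.mpr hx) (by simp)
  simpa using this

lemma cw_le_card {G : SimpleGraph α} (t : Finset α) : cw G t ≤ t.card := by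
  obtain ⟨c, hc1, _, hc3⟩ := cw_exists G t
  rw [← hc3]
  exact Finset.card_le_card hc1

lemma cw_empty (G : SimpleGraph α) : cw G ∅ = 0 :=
  Nat.le_zero.mp (cw_le_card ∅)

lemma clique_split {G : SimpleGraph α} {t1 t2 c : Finset α} (hd : Disjoint t1 t2)
    (hnc : ∀ a ∈ t1, ∀ b ∈ t2, ¬G.Adj a b) (hc : G.IsClique (c : Set α))
    (hsub : c ⊆ t1 ∪ t2) : c ⊆ t1 ∨ c ⊆ t2 := by
  by_contra h
  push_neg at h
  obtain ⟨h1, h2⟩ := h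
  obtain ⟨a, ha, ha1⟩ := Finset.not_subset.mp h1
  obtain ⟨b, hb, hb2⟩ := Finset.not_subset.mp h2
  have ha2 : a ∈ t2 := (Finset.mem_union.mp (hsub ha)).resolve_left ha1
  have hb1 : b ∈ t1 := (Finset.mem_union.mp (hsub hb)).resolve_right hb2
  have hne : b ≠ a := fun h => Finset.disjoint_left.mp hd (h ▸ hb1) (h ▸ ha2)
  exact hnc b hb1 a ha2 (hc hb ha hne)

lemma cw_union_nocross {G : SimpleGraph α} {t1 t2 : Finset α} (hd : Disjoint t1 t2)
    (hnc : ∀ a ∈ t1, ∀ b ∈ t2, ¬G.Adj a b) :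
    cw G (t1 ∪ t2) = max (cw G t1) (cw G t2) := by
  apply le_antisymm
  · obtain ⟨c, hc1, hc2, hc3⟩ := cw_exists G (t1 ∪ t2)
    rw [← hc3]
    rcases clique_split hd hnc hc2 hc1 with h | h
    · exact le_max_of_le_left (le_cw h hc2)
    · exact le_max_of_le_right (le_cw h hc2)
  · exact max_le (cw_mono Finset.subset_union_left) (cw_mono Finset.subset_union_right)

lemma isClique_union {G : SimpleGraph α} {c1 c2 : Finset α}
    (h1 : G.IsClique (c1 : Set α)) (h2 : G.IsClique (c2 : Set α)) (hd : Disjoint c1 c2)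
    (hcr : ∀ a ∈ c1, ∀ b ∈ c2, G.Adj a b) : G.IsClique ((c1 ∪ c2 : Finset α) : Set α) := by
  intro x hx y hy hne
  simp only [Finset.coe_union, Set.mem_union, Finset.mem_coe] at hx hy
  rcases hx with hx | hx <;> rcases hy with hy | hy
  · exact h1 hx hy hne
  · exact hcr x hx y hy
  · exact (hcr y hy x hx).symm
  · exact h2 hx hy hne

lemma cw_union_cross {G : SimpleGraph α} {t1 t2 : Finset α} (hd : Disjoint t1 t2)
    (hcr : ∀ a ∈ t1, ∀ b ∈ t2, G.Adj a b) :
    cw G (t1 ∪ t2) = cw G t1 + cw G t2 := by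
  apply le_antisymm
  · obtain ⟨c, hc1, hc2, hc3⟩ := cw_exists G (t1 ∪ t2)
    rw [← hc3]
    have hcu : c = (c ∩ t1) ∪ (c ∩ t2) := by
      rw [← Finset.inter_union_distrib_left]
      exact (Finset.inter_eq_left.mpr hc1).symm
    have hcd : Disjoint (c ∩ t1) (c ∩ t2) :=
      hd.mono Finset.inter_subset_right Finset.inter_subset_right
    calc c.card = (c ∩ t1).card + (c ∩ t2).card := by rw [← Finset.card_union_of_disjoint hcd, ← hcu]
    _ ≤ cw G t1 + cw G t2 := by
        gcongr
        · exact le_cw Finset.inter_subset_right (hc2.subset (by simp))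
        · exact le_cw Finset.inter_subset_right (hc2.subset (by simp))
  · obtain ⟨c1, h11, h12, h13⟩ := cw_exists G t1
    obtain ⟨c2, h21, h22, h23⟩ := cw_exists G t2
    have hcd : Disjoint c1 c2 := hd.mono h11 h21
    have hclique := isClique_union h12 h22 hcd (fun a ha b hb => hcr a (h11 ha) b (h21 hb))
    have := le_cw (Finset.union_subset_union h11 h21) hclique
    rwa [Finset.card_union_of_disjoint hcd, h13, h23] at this

/-- Coloring lemma: a cograph with clique number at most `|K|` maps homomorphically
into the clique `K`. -/
lemma color {G : SimpleGraph α} (hG : P4F G) :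
    ∀ (n : ℕ) (p K : Finset α), p.card = n → G.IsClique (K : Set α) → cw G p ≤ K.card →
    ∃ c : α → α, (∀ x ∈ p, c x ∈ K) ∧
      (∀ x ∈ p, ∀ y ∈ p, G.Adj x y → G.Adj (c x) (c y)) := by
  intro n
  induction n using Nat.strong_induction_on with
  | _ n ih =>
    intro p K hcard hK hcw
    match n, hcard with
    | 0, hcard =>
      rw [Finset.card_eq_zero] at hcard
      subst hcard
      exact ⟨id, by simp, by simp⟩
    | 1, hcard =>
      obtain ⟨x, rfl⟩ := Finset.card_eq_one.mp hcard
      have h1 : 1 ≤ cw G {x} := one_le_cw (Finset.mem_singleton_self x)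
      have hKne : K.Nonempty := by
        rw [← Finset.card_pos]; omega
      obtain ⟨k, hk⟩ := hKne
      refine ⟨fun _ => k, fun y _ => hk, ?_⟩
      intro a ha b hb hadj
      rw [Finset.mem_singleton] at ha hb
      rw [ha, hb] at hadj
      exact absurd hadj (G.loopless.irrefl _)
    | (m+2), hcard =>
      obtain ⟨t1, t2, hu, hd, hn1, hn2, hcr⟩ := seinsche (m+2) hG p hcard (by omega)
      have hcards : t1.card + t2.card = m + 2 := by
        rw [← Finset.card_union_of_disjoint hd, hu, hcard]
      have hc1 : t1.card < m + 2 := by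
        have := Finset.card_pos.mpr hn2; omega
      have hc2 : t2.card < m + 2 := by
        have := Finset.card_pos.mpr hn1; omega
      rcases hcr with hcr | hcr
      · -- no cross edges: color both sides into K
        obtain ⟨f1, hf1K, hf1⟩ := ih t1.card hc1 t1 K rfl hK
          (le_trans (by rw [← hu]; exact cw_mono Finset.subset_union_left) hcw)
        obtain ⟨f2, hf2K, hf2⟩ := ih t2.card hc2 t2 K rfl hK
          (le_trans (by rw [← hu]; exact cw_mono Finset.subset_union_right) hcw)
        classical
        refine ⟨fun z => if z ∈ t1 then f1 z else f2 z, ?_, ?_⟩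
        · intro x hx
          rw [← hu, Finset.mem_union] at hx
          rcases hx with hx | hx
          · simp [hx, hf1K x hx]
          · by_cases hx1 : x ∈ t1
            · simp [hx1, hf1K x hx1]
            · simp [hx1, hf2K x hx]
        · intro x hx y hy hadj
          rw [← hu, Finset.mem_union] at hx hy
          rcases hx with hx | hx <;> rcases hy with hy | hy
          · simpa [hx, hy] using hf1 x hx y hy hadj
          · exact absurd hadj (hcr x hx y hy)
          · exact absurd hadj.symm (hcr y hy x hx)
          · have hx1 : x ∉ t1 := fun h => Finset.disjoint_left.mp hd h hx
            have hy1 : y ∉ t1 := fun h => Finset.disjoint_left.mp hd h hy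
            simpa [hx1, hy1] using hf2 x hx y hy hadj
      · -- join: split K
        have hadd : cw G t1 + cw G t2 ≤ K.card := by
          rw [← cw_union_cross hd hcr, hu]; exact hcw
        obtain ⟨K1, hK1sub, hK1card⟩ := Finset.exists_subset_card_eq
          (le_trans (Nat.le_add_right _ _) hadd)
        have hrest : cw G t2 ≤ (K \ K1).card := by
          rw [Finset.card_sdiff_of_subset hK1sub, hK1card]; omega
        obtain ⟨K2, hK2sub, hK2card⟩ := Finset.exists_subset_card_eq hrest
        have hK2sub' : K2 ⊆ K := hK2sub.trans (Finset.sdiff_subset)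
        obtain ⟨f1, hf1K, hf1⟩ := ih t1.card hc1 t1 K1 rfl
          (hK.subset (by exact_mod_cast hK1sub)) (by omega)
        obtain ⟨f2, hf2K, hf2⟩ := ih t2.card hc2 t2 K2 rfl
          (hK.subset (by exact_mod_cast hK2sub')) (by omega)
        classical
        refine ⟨fun z => if z ∈ t1 then f1 z else f2 z, ?_, ?_⟩
        · intro x hx
          rw [← hu, Finset.mem_union] at hx
          rcases hx with hx | hx
          · simp [hx, hK1sub (hf1K x hx)]
          · by_cases hx1 : x ∈ t1
            · simp [hx1, hK1sub (hf1K x hx1)]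
            · simp [hx1, hK2sub' (hf2K x hx)]
        · intro x hx y hy hadj
          rw [← hu, Finset.mem_union] at hx hy
          have key : ∀ a ∈ t1, ∀ b ∈ t2, G.Adj (f1 a) (f2 b) := by
            intro a ha b hb
            have h1 : f1 a ∈ K1 := hf1K a ha
            have h2 : f2 b ∈ K2 := hf2K b hb
            have hne : f1 a ≠ f2 b := by
              intro h
              have := hK2sub h2
              rw [Finset.mem_sdiff] at this
              exact this.2 (h ▸ h1)
            exact hK (Finset.mem_coe.mpr (hK1sub h1)) (Finset.mem_coe.mpr (hK2sub' h2)) hne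
          rcases hx with hx | hx <;> rcases hy with hy | hy
          · simpa [hx, hy] using hf1 x hx y hy hadj
          · have hy1 : y ∉ t1 := fun h => Finset.disjoint_left.mp hd h hy
            simpa [hx, hy1] using key x hx y hy
          · have hx1 : x ∉ t1 := fun h => Finset.disjoint_left.mp hd h hx
            simpa [hx1, hy] using (key y hy x hx).symm
          · have hx1 : x ∉ t1 := fun h => Finset.disjoint_left.mp hd h hx
            have hy1 : y ∉ t1 := fun h => Finset.disjoint_left.mp hd h hy
            simpa [hx1, hy1] using hf2 x hx y hy hadj

/-- Main induction for the backward direction. -/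
lemma retract_on {G : SimpleGraph α} (hG : P4F G) :
    ∀ (n : ℕ) (t s : Finset α), t.card = n → s ⊆ t → s.Nonempty →
    cw G t = cw G s →
    (∀ v ∈ s, ∃ c : Finset α, c ⊆ s ∧ v ∈ c ∧ G.IsClique (c : Set α) ∧ c.card = cw G s) →
    ∃ r : α → α, (∀ x ∈ t, r x ∈ s) ∧ (∀ x ∈ s, r x = x) ∧
      (∀ x ∈ t, ∀ y ∈ t, G.Adj x y → G.Adj (r x) (r y)) := by
  intro n
  induction n using Nat.strong_induction_on with
  | _ n ih =>
    intro t s hcard hsub hsne hcw hvc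
    classical
    by_cases hn2 : n < 2
    · -- t has at most one element, so s = t
      have hst : s = t := Finset.eq_of_subset_of_card_le hsub (by
        have := Finset.card_pos.mpr hsne
        have := Finset.card_le_card hsub
        omega)
      subst hst
      exact ⟨id, fun x hx => hx, fun x _ => rfl, fun x _ y _ h => h⟩
    push_neg at hn2
    obtain ⟨t1, t2, hu, hd, hn1t, hn2t, hcr⟩ := seinsche n hG t hcard hn2
    have hcards : t1.card + t2.card = n := by
      rw [← Finset.card_union_of_disjoint hd, hu, hcard]
    have hlt1 : t1.card < n := by have := Finset.card_pos.mpr hn2t; omega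
    have hlt2 : t2.card < n := by have := Finset.card_pos.mpr hn1t; omega
    set s1 := s ∩ t1 with hs1def
    set s2 := s ∩ t2 with hs2def
    have hsu : s1 ∪ s2 = s := by
      rw [hs1def, hs2def, ← Finset.inter_union_distrib_left, hu]
      exact Finset.inter_eq_left.mpr hsub
    have hsd : Disjoint s1 s2 := hd.mono Finset.inter_subset_right Finset.inter_subset_right
    have hs1t : s1 ⊆ t1 := Finset.inter_subset_right
    have hs2t : s2 ⊆ t2 := Finset.inter_subset_right
    rcases hcr with hcr | hcr
    · -- no cross edges
      -- every max clique of s containing v stays in v's side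
      have hside : ∀ v ∈ s, ∀ c : Finset α, c ⊆ s → v ∈ c → G.IsClique (c : Set α) →
          (c ⊆ s1 ∨ c ⊆ s2) := by
        intro v hv c hcs hvc' hcl
        have : c ⊆ s1 ∪ s2 := by rw [hsu]; exact hcs
        exact clique_split hsd (fun a ha b hb => hcr a (hs1t ha) b (hs2t hb)) hcl this
      by_cases hs1ne : s1.Nonempty
      · by_cases hs2ne : s2.Nonempty
        · -- both sides nonempty : cw s1 = cw s = cw s2
          have hcw1 : cw G s1 = cw G s := by
            obtain ⟨v, hv⟩ := hs1ne
            obtain ⟨c, hc1, hc2, hc3, hc4⟩ := hvc v (Finset.inter_subset_left hv)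
            rcases hside v (Finset.inter_subset_left hv) c hc1 hc2 hc3 with h | h
            · exact le_antisymm (cw_mono (Finset.inter_subset_left)) (by rw [← hc4]; exact le_cw h hc3)
            · exact absurd (Finset.disjoint_left.mp hsd hv (h hc2)) not_false
          have hcw2 : cw G s2 = cw G s := by
            obtain ⟨v, hv⟩ := hs2ne
            obtain ⟨c, hc1, hc2, hc3, hc4⟩ := hvc v (Finset.inter_subset_left hv)
            rcases hside v (Finset.inter_subset_left hv) c hc1 hc2 hc3 with h | h
            · exact absurd (Finset.disjoint_left.mp hsd (h hc2) hv) not_false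
            · exact le_antisymm (cw_mono (Finset.inter_subset_left)) (by rw [← hc4]; exact le_cw h hc3)
          have hcwt1 : cw G t1 = cw G s1 := le_antisymm
            (by rw [hcw1, ← hcw]; exact le_trans (cw_mono (by rw [← hu]; exact Finset.subset_union_left)) le_rfl)
            (cw_mono hs1t)
          have hcwt2 : cw G t2 = cw G s2 := le_antisymm
            (by rw [hcw2, ← hcw]; exact cw_mono (by rw [← hu]; exact Finset.subset_union_right))
            (cw_mono hs2t)
          have hvc1 : ∀ v ∈ s1, ∃ c : Finset α, c ⊆ s1 ∧ v ∈ c ∧ G.IsClique (c : Set α) ∧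
              c.card = cw G s1 := by
            intro v hv
            obtain ⟨c, hc1, hc2, hc3, hc4⟩ := hvc v (Finset.inter_subset_left hv)
            rcases hside v (Finset.inter_subset_left hv) c hc1 hc2 hc3 with h | h
            · exact ⟨c, h, hc2, hc3, by rw [hc4, hcw1]⟩
            · exact absurd (Finset.disjoint_left.mp hsd hv (h hc2)) not_false
          have hvc2 : ∀ v ∈ s2, ∃ c : Finset α, c ⊆ s2 ∧ v ∈ c ∧ G.IsClique (c : Set α) ∧
              c.card = cw G s2 := by
            intro v hv
            obtain ⟨c, hc1, hc2, hc3, hc4⟩ := hvc v (Finset.inter_subset_left hv)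
            rcases hside v (Finset.inter_subset_left hv) c hc1 hc2 hc3 with h | h
            · exact absurd (Finset.disjoint_left.mp hsd (h hc2) hv) not_false
            · exact ⟨c, h, hc2, hc3, by rw [hc4, hcw2]⟩
          obtain ⟨r1, hr1a, hr1b, hr1c⟩ := ih t1.card hlt1 t1 s1 rfl hs1t hs1ne hcwt1 hvc1
          obtain ⟨r2, hr2a, hr2b, hr2c⟩ := ih t2.card hlt2 t2 s2 rfl hs2t hs2ne hcwt2 hvc2
          refine ⟨fun z => if z ∈ t1 then r1 z else r2 z, ?_, ?_, ?_⟩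
          · intro x hx
            rw [← hu, Finset.mem_union] at hx
            rcases hx with hx | hx
            · simp only [hx, if_pos]
              exact (hsu ▸ Finset.mem_union_left s2 (hr1a x hx))
            · have hx1 : x ∉ t1 := fun h => Finset.disjoint_left.mp hd h hx
              simp only [hx1, if_neg, if_false]
              exact (hsu ▸ Finset.mem_union_right s1 (hr2a x hx))
          · intro x hx
            rw [← hsu, Finset.mem_union] at hx
            rcases hx with hx | hx
            · simp only [hs1t hx, if_pos]
              exact hr1b x hx
            · have hx1 : x ∉ t1 := fun h => Finset.disjoint_left.mp hd h (hs2t hx)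
              simp only [hx1, if_neg, if_false]
              exact hr2b x hx
          · intro x hx y hy hadj
            rw [← hu, Finset.mem_union] at hx hy
            rcases hx with hx | hx <;> rcases hy with hy | hy
            · simpa [hx, hy] using hr1c x hx y hy hadj
            · exact absurd hadj (hcr x hx y hy)
            · exact absurd hadj.symm (hcr y hy x hx)
            · have hx1 : x ∉ t1 := fun h => Finset.disjoint_left.mp hd h hx
              have hy1 : y ∉ t1 := fun h => Finset.disjoint_left.mp hd h hy
              simpa [hx1, hy1] using hr2c x hx y hy hadj
        · -- s2 empty : s ⊆ t1, color t2 into a max clique of s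
          have hs2e : s2 = ∅ := Finset.not_nonempty_iff_eq_empty.mp hs2ne
          have hss1 : s = s1 := by rw [← hsu, hs2e, Finset.union_empty]
          have hst1 : s ⊆ t1 := hss1 ▸ hs1t
          have hcwt1 : cw G t1 = cw G s :=
            le_antisymm (by rw [← hcw]; exact cw_mono (by rw [← hu]; exact Finset.subset_union_left))
              (cw_mono hst1)
          obtain ⟨r1, hr1a, hr1b, hr1c⟩ := ih t1.card hlt1 t1 s rfl hst1 hsne hcwt1 hvc
          obtain ⟨v0, hv0⟩ := hsne
          obtain ⟨K, hK1, _, hK3, hK4⟩ := hvc v0 hv0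
          obtain ⟨f2, hf2a, hf2b⟩ := color hG t2.card t2 K rfl hK3 (by
            rw [hK4, ← hcw]
            exact cw_mono (by rw [← hu]; exact Finset.subset_union_right))
          refine ⟨fun z => if z ∈ t1 then r1 z else f2 z, ?_, ?_, ?_⟩
          · intro x hx
            rw [← hu, Finset.mem_union] at hx
            rcases hx with hx | hx
            · simp only [hx, if_pos]
              exact hr1a x hx
            · have hx1 : x ∉ t1 := fun h => Finset.disjoint_left.mp hd h hx
              simp only [hx1, if_neg, if_false]
              exact hK1 (hf2a x hx)
          · intro x hx
            simp only [hst1 hx, if_pos]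
            exact hr1b x hx
          · intro x hx y hy hadj
            rw [← hu, Finset.mem_union] at hx hy
            rcases hx with hx | hx <;> rcases hy with hy | hy
            · simpa [hx, hy] using hr1c x hx y hy hadj
            · exact absurd hadj (hcr x hx y hy)
            · exact absurd hadj.symm (hcr y hy x hx)
            · have hx1 : x ∉ t1 := fun h => Finset.disjoint_left.mp hd h hx
              have hy1 : y ∉ t1 := fun h => Finset.disjoint_left.mp hd h hy
              simpa [hx1, hy1] using hf2b x hx y hy hadj
      · -- s1 empty : symmetric
        have hs1e : s1 = ∅ := Finset.not_nonempty_iff_eq_empty.mp hs1ne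
        have hss2 : s = s2 := by rw [← hsu, hs1e, Finset.empty_union]
        have hst2 : s ⊆ t2 := hss2 ▸ hs2t
        have hcwt2 : cw G t2 = cw G s :=
          le_antisymm (by rw [← hcw]; exact cw_mono (by rw [← hu]; exact Finset.subset_union_right))
            (cw_mono hst2)
        obtain ⟨r2, hr2a, hr2b, hr2c⟩ := ih t2.card hlt2 t2 s rfl hst2 hsne hcwt2 hvc
        obtain ⟨v0, hv0⟩ := hsne
        obtain ⟨K, hK1, _, hK3, hK4⟩ := hvc v0 hv0
        obtain ⟨f1, hf1a, hf1b⟩ := color hG t1.card t1 K rfl hK3 (by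
          rw [hK4, ← hcw]
          exact cw_mono (by rw [← hu]; exact Finset.subset_union_left))
        refine ⟨fun z => if z ∈ t2 then r2 z else f1 z, ?_, ?_, ?_⟩
        · intro x hx
          rw [← hu, Finset.mem_union] at hx
          rcases hx with hx | hx
          · have hx2 : x ∉ t2 := fun h => Finset.disjoint_left.mp hd hx h
            simp only [hx2, if_neg, if_false]
            exact hK1 (hf1a x hx)
          · simp only [hx, if_pos]
            exact hr2a x hx
        · intro x hx
          simp only [hst2 hx, if_pos]
          exact hr2b x hx
        · intro x hx y hy hadj
          rw [← hu, Finset.mem_union] at hx hy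
          rcases hx with hx | hx <;> rcases hy with hy | hy
          · have hx2 : x ∉ t2 := fun h => Finset.disjoint_left.mp hd hx h
            have hy2 : y ∉ t2 := fun h => Finset.disjoint_left.mp hd hy h
            simpa [hx2, hy2] using hf1b x hx y hy hadj
          · exact absurd hadj (hcr x hx y hy)
          · exact absurd hadj.symm (hcr y hy x hx)
          · simpa [hx, hy] using hr2c x hx y hy hadj
    · -- join case
      have hcwt : cw G t1 + cw G t2 = cw G t := by rw [← hu]; exact (cw_union_cross hd hcr).symm
      have hcrs : ∀ a ∈ s1, ∀ b ∈ s2, G.Adj a b := fun a ha b hb => hcr a (hs1t ha) b (hs2t hb)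
      have hcws : cw G s1 + cw G s2 = cw G s := by
        rw [← hsu]; exact (cw_union_cross hsd hcrs).symm
      have hle1 : cw G s1 ≤ cw G t1 := cw_mono hs1t
      have hle2 : cw G s2 ≤ cw G t2 := cw_mono hs2t
      have hs1ne : s1.Nonempty := by
        rw [Finset.nonempty_iff_ne_empty]
        intro h
        rw [h, cw_empty] at hcws
        obtain ⟨x, hx⟩ := hn1t
        have h1 : 1 ≤ cw G t1 := one_le_cw hx
        have h2 : cw G s2 ≤ cw G t2 := hle2
        omega
      have hs2ne : s2.Nonempty := by
        rw [Finset.nonempty_iff_ne_empty]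
        intro h
        rw [h, cw_empty] at hcws
        obtain ⟨x, hx⟩ := hn2t
        have h1 : 1 ≤ cw G t2 := one_le_cw hx
        omega
      have heq1 : cw G t1 = cw G s1 := by omega
      have heq2 : cw G t2 = cw G s2 := by omega
      have hvcs : ∀ i : Bool, True := fun _ => trivial
      have hvc1 : ∀ v ∈ s1, ∃ c : Finset α, c ⊆ s1 ∧ v ∈ c ∧ G.IsClique (c : Set α) ∧
          c.card = cw G s1 := by
        intro v hv
        obtain ⟨c, hc1, hc2, hc3, hc4⟩ := hvc v (Finset.inter_subset_left hv)
        have hcsplit : c = (c ∩ s1) ∪ (c ∩ s2) := by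
          rw [← Finset.inter_union_distrib_left, hsu]
          exact (Finset.inter_eq_left.mpr hc1).symm
        have hcd : Disjoint (c ∩ s1) (c ∩ s2) :=
          hsd.mono Finset.inter_subset_right Finset.inter_subset_right
        have hcadd : (c ∩ s1).card + (c ∩ s2).card = cw G s := by
          rw [← Finset.card_union_of_disjoint hcd, ← hcsplit, hc4]
        have hb1 : (c ∩ s1).card ≤ cw G s1 :=
          le_cw Finset.inter_subset_right (hc3.subset (by simp))
        have hb2 : (c ∩ s2).card ≤ cw G s2 :=
          le_cw Finset.inter_subset_right (hc3.subset (by simp))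
        refine ⟨c ∩ s1, Finset.inter_subset_right, Finset.mem_inter.mpr ⟨hc2, hv⟩,
          hc3.subset (by simp), by omega⟩
      have hvc2 : ∀ v ∈ s2, ∃ c : Finset α, c ⊆ s2 ∧ v ∈ c ∧ G.IsClique (c : Set α) ∧
          c.card = cw G s2 := by
        intro v hv
        obtain ⟨c, hc1, hc2, hc3, hc4⟩ := hvc v (Finset.inter_subset_left hv)
        have hcsplit : c = (c ∩ s1) ∪ (c ∩ s2) := by
          rw [← Finset.inter_union_distrib_left, hsu]
          exact (Finset.inter_eq_left.mpr hc1).symm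
        have hcd : Disjoint (c ∩ s1) (c ∩ s2) :=
          hsd.mono Finset.inter_subset_right Finset.inter_subset_right
        have hcadd : (c ∩ s1).card + (c ∩ s2).card = cw G s := by
          rw [← Finset.card_union_of_disjoint hcd, ← hcsplit, hc4]
        have hb1 : (c ∩ s1).card ≤ cw G s1 :=
          le_cw Finset.inter_subset_right (hc3.subset (by simp))
        have hb2 : (c ∩ s2).card ≤ cw G s2 :=
          le_cw Finset.inter_subset_right (hc3.subset (by simp))
        refine ⟨c ∩ s2, Finset.inter_subset_right, Finset.mem_inter.mpr ⟨hc2, hv⟩,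
          hc3.subset (by simp), by omega⟩
      obtain ⟨r1, hr1a, hr1b, hr1c⟩ := ih t1.card hlt1 t1 s1 rfl hs1t hs1ne heq1 hvc1
      obtain ⟨r2, hr2a, hr2b, hr2c⟩ := ih t2.card hlt2 t2 s2 rfl hs2t hs2ne heq2 hvc2
      refine ⟨fun z => if z ∈ t1 then r1 z else r2 z, ?_, ?_, ?_⟩
      · intro x hx
        rw [← hu, Finset.mem_union] at hx
        rcases hx with hx | hx
        · simp only [hx, if_pos]
          exact hsu ▸ Finset.mem_union_left s2 (hr1a x hx)
        · have hx1 : x ∉ t1 := fun h => Finset.disjoint_left.mp hd h hx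
          simp only [hx1, if_neg, if_false]
          exact hsu ▸ Finset.mem_union_right s1 (hr2a x hx)
      · intro x hx
        rw [← hsu, Finset.mem_union] at hx
        rcases hx with hx | hx
        · simp only [hs1t hx, if_pos]
          exact hr1b x hx
        · have hx1 : x ∉ t1 := fun h => Finset.disjoint_left.mp hd h (hs2t hx)
          simp only [hx1, if_neg, if_false]
          exact hr2b x hx
      · intro x hx y hy hadj
        rw [← hu, Finset.mem_union] at hx hy
        rcases hx with hx | hx <;> rcases hy with hy | hy
        · simpa [hx, hy] using hr1c x hx y hy hadj
        · have hy1 : y ∉ t1 := fun h => Finset.disjoint_left.mp hd h hy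
          simp only [hx, if_pos, hy1, if_neg, if_false]
          exact hcr _ (hs1t (hr1a x hx)) _ (hs2t (hr2a y hy))
        · have hx1 : x ∉ t1 := fun h => Finset.disjoint_left.mp hd h hx
          simp only [hx1, if_neg, if_false, hy, if_pos]
          exact (hcr _ (hs1t (hr1a y hy)) _ (hs2t (hr2a x hx))).symm
        · have hx1 : x ∉ t1 := fun h => Finset.disjoint_left.mp hd h hx
          have hy1 : y ∉ t1 := fun h => Finset.disjoint_left.mp hd h hy
          simpa [hx1, hy1] using hr2c x hx y hy hadj


end CW

section Backward
variable {α : Type*} [DecidableEq α]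


lemma backward {β : Type} [Fintype β] (H : SimpleGraph β) (hHne : Nonempty β)
    (α : Type) (G : SimpleGraph α) (hFin : Fintype α) (hCo : P4F G)
    (f : H ↪g G) (hω : G.cliqueNum = H.cliqueNum)
    (hRHS : ∀ v : β, ∃ s : Finset β, v ∈ s ∧ H.IsNClique H.cliqueNum s) :
    G.IsRetract H := by
  classical
  letI := hFin
  set S : Finset α := Finset.univ.image (fun b => f b) with hSdef
  -- clique transfer
  have him : ∀ d : Finset β, H.IsClique (d : Set β) →
      G.IsClique ((d.image (fun b => f b) : Finset α) : Set α) := by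
    intro d hd x hx y hy hne
    simp only [Finset.coe_image, Set.mem_image, Finset.mem_coe] at hx hy
    obtain ⟨a, ha, rfl⟩ := hx
    obtain ⟨b, hb, rfl⟩ := hy
    exact f.map_rel_iff.mpr (hd ha hb (fun h => hne (h ▸ rfl)))
  have hpre : ∀ c : Finset α, c ⊆ S → G.IsClique (c : Set α) →
      ∃ d : Finset β, d.image (fun b => f b) = c ∧ H.IsClique (d : Set β) ∧ d.card = c.card := by
    intro c hc hcl
    obtain ⟨d, -, hd2⟩ := Finset.subset_image_iff.mp hc
    refine ⟨d, hd2, ?_, by rw [← hd2, Finset.card_image_of_injective d f.injective]⟩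
    intro a ha b hb hne
    have hfa : f a ∈ c := hd2 ▸ Finset.mem_image_of_mem _ ha
    have hfb : f b ∈ c := hd2 ▸ Finset.mem_image_of_mem _ hb
    exact f.map_rel_iff.mp (hcl hfa hfb (fun h => hne (f.injective h)))
  have hwS : cw G S = H.cliqueNum := by
    apply le_antisymm
    · obtain ⟨c, hc1, hc2, hc3⟩ := cw_exists G S
      obtain ⟨d, hd1, hd2, hd3⟩ := hpre c hc1 hc2
      rw [← hc3, ← hd3]
      exact hd2.card_le_cliqueNum
    · obtain ⟨d, hd⟩ := SimpleGraph.exists_isNClique_cliqueNum (G := H)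
      have := le_cw (t := S) (Finset.image_subset_iff.mpr (fun b _ => Finset.mem_image_of_mem _ (Finset.mem_univ b))) (him d hd.isClique)
      rwa [Finset.card_image_of_injective d f.injective, hd.card_eq] at this
  have hwU : cw G Finset.univ = G.cliqueNum := by
    apply le_antisymm
    · obtain ⟨c, hc1, hc2, hc3⟩ := cw_exists G Finset.univ
      rw [← hc3]
      exact hc2.card_le_cliqueNum
    · obtain ⟨s, hs⟩ := SimpleGraph.exists_isNClique_cliqueNum (G := G)
      have := le_cw (Finset.subset_univ s) hs.isClique
      rwa [hs.card_eq] at this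
  have hSne : S.Nonempty := ⟨f hHne.some, Finset.mem_image_of_mem _ (Finset.mem_univ _)⟩
  have hvc : ∀ v ∈ S, ∃ c : Finset α, c ⊆ S ∧ v ∈ c ∧ G.IsClique (c : Set α) ∧
      c.card = cw G S := by
    intro v hv
    obtain ⟨b, -, rfl⟩ := Finset.mem_image.mp hv
    obtain ⟨d, hd1, hd2⟩ := hRHS b
    refine ⟨d.image (fun b => f b), ?_, Finset.mem_image_of_mem _ hd1, him d hd2.isClique, ?_⟩
    · exact Finset.image_subset_iff.mpr (fun x _ => Finset.mem_image_of_mem _ (Finset.mem_univ x))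
    · rw [Finset.card_image_of_injective d f.injective, hd2.card_eq, hwS]
  obtain ⟨r, hra, hrb, hrc⟩ := retract_on hCo Finset.univ.card Finset.univ S rfl
    (Finset.subset_univ S) hSne (by rw [hwU, hwS, hω]) hvc
  -- inverse of f on S
  have hgex : ∀ a ∈ S, ∃ b, f b = a := by
    intro a ha
    obtain ⟨b, -, rfl⟩ := Finset.mem_image.mp ha
    exact ⟨b, rfl⟩
  set g : α → β := fun a => if h : ∃ b, f b = a then h.choose else hHne.some with hgdef
  have hfg : ∀ a ∈ S, f (g a) = a := by
    intro a ha
    have h := hgex a ha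
    simp only [hgdef, dif_pos h]
    exact h.choose_spec
  have hgf : ∀ b : β, g (f b) = b := by
    intro b
    apply f.injective
    exact hfg (f b) (Finset.mem_image_of_mem _ (Finset.mem_univ b))
  refine ⟨⟨fun a => g (r a), ?_⟩, f.toHom, ?_⟩
  · intro a b hadj
    have h1 : r a ∈ S := hra a (Finset.mem_univ a)
    have h2 : r b ∈ S := hra b (Finset.mem_univ b)
    have h3 : G.Adj (r a) (r b) := hrc a (Finset.mem_univ a) b (Finset.mem_univ b) hadj
    rw [← hfg _ h1, ← hfg _ h2] at h3
    exact f.map_rel_iff.mp h3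
  · intro v
    have h1 : f v ∈ S := Finset.mem_image_of_mem _ (Finset.mem_univ v)
    show g (r (f v)) = v
    rw [hrb (f v) h1, hgf]


end Backward

section Forward
variable {β : Type*}


/-- `H` plus a true twin of `v`. -/
def gadget (H : SimpleGraph β) (v : β) : SimpleGraph (β ⊕ Unit) where
  Adj x y := match x, y with
    | .inl a, .inl b => H.Adj a b
    | .inl a, .inr _ => H.Adj a v ∨ a = v
    | .inr _, .inl b => H.Adj b v ∨ b = v
    | .inr _, .inr _ => False
  symm := by
    constructor
    rintro (a | u) (b | u') h
    · exact h.symm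
    · exact h
    · exact h
    · exact h.elim
  loopless := by
    constructor
    rintro (a | u) h
    · exact H.loopless.irrefl a h
    · exact h

variable {H : SimpleGraph β} {v : β}

lemma gadget_adj_inl_inl {a b : β} :
    (gadget H v).Adj (Sum.inl a) (Sum.inl b) ↔ H.Adj a b := Iff.rfl
lemma gadget_adj_inl_inr {a : β} {u : Unit} :
    (gadget H v).Adj (Sum.inl a) (Sum.inr u) ↔ (H.Adj a v ∨ a = v) := Iff.rfl
lemma gadget_adj_inr_inl {b : β} {u : Unit} :
    (gadget H v).Adj (Sum.inr u) (Sum.inl b) ↔ (H.Adj b v ∨ b = v) := Iff.rfl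
lemma gadget_adj_inr_inr {u u' : Unit} :
    ¬(gadget H v).Adj (Sum.inr u) (Sum.inr u') := fun h => h

lemma gadget_no_a (hH : P4F H) {b c d : β} (h1 : H.Adj b v ∨ b = v) (h2 : H.Adj b c)
    (h3 : H.Adj c d) (h4 : ¬(H.Adj c v ∨ c = v)) (h5 : ¬(H.Adj d v ∨ d = v))
    (h6 : ¬H.Adj b d) : False := by
  push_neg at h4 h5
  rcases h1 with h1 | rfl
  · exact hH v b c d h1.symm h2 h3 (fun h => h4.1 h.symm) (fun h => h5.1 h.symm) h6
  · exact h4.1 h2.symm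

lemma gadget_no_b (hH : P4F H) {a c d : β} (h1 : H.Adj a v ∨ a = v) (h2 : H.Adj c v ∨ c = v)
    (h3 : H.Adj c d) (h4 : ¬H.Adj a c) (h5 : ¬H.Adj a d) (h6 : ¬(H.Adj d v ∨ d = v))
    (hne : a ≠ c) : False := by
  push_neg at h6
  rcases h1 with h1 | rfl
  · rcases h2 with h2 | rfl
    · exact hH a v c d h1 h2.symm h3 h4 h5 (fun h => h6.1 h.symm)
    · exact h4 h1
  · rcases h2 with h2 | rfl
    · exact h4 h2.symm
    · exact hne rfl

lemma gadget_p4f (hH : P4F H) : P4F (gadget H v) := by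
  rintro (a | u) (b | u) (c | u) (d | u) hab hbc hcd hac had hbd
  · exact hH a b c d hab hbc hcd hac had hbd
  · -- d = u
    exact gadget_no_a hH hcd hbc.symm hab.symm hbd had (fun h => hac h.symm)
  · -- c = u
    obtain ⟨n1, n2, n3, n4, n5, n6⟩ := pattern_ne hab hbc hcd hac had hbd
    exact gadget_no_b hH hcd hbc hab.symm (fun h => hbd h.symm) (fun h => had h.symm) hac
      (fun h => n5 (by rw [h]))
  · -- c = u, d = u : c = d
    obtain ⟨n1, n2, n3, n4, n5, n6⟩ := pattern_ne hab hbc hcd hac had hbd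
    exact n6 rfl
  · -- b = u
    obtain ⟨n1, n2, n3, n4, n5, n6⟩ := pattern_ne hab hbc hcd hac had hbd
    exact gadget_no_b hH hab hbc hcd hac had hbd (fun h => n2 (by rw [h]))
  · -- b = u, d = u
    obtain ⟨n1, n2, n3, n4, n5, n6⟩ := pattern_ne hab hbc hcd hac had hbd
    exact n5 rfl
  · -- b = u, c = u
    obtain ⟨n1, n2, n3, n4, n5, n6⟩ := pattern_ne hab hbc hcd hac had hbd
    exact n4 rfl
  · -- b,c,d = u
    obtain ⟨n1, n2, n3, n4, n5, n6⟩ := pattern_ne hab hbc hcd hac had hbd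
    exact n4 rfl
  · -- a = u
    exact gadget_no_a hH hab hbc hcd hac had hbd
  · -- a = u, d = u
    obtain ⟨n1, n2, n3, n4, n5, n6⟩ := pattern_ne hab hbc hcd hac had hbd
    exact n3 rfl
  · -- a = u, c = u
    obtain ⟨n1, n2, n3, n4, n5, n6⟩ := pattern_ne hab hbc hcd hac had hbd
    exact n2 rfl
  · obtain ⟨n1, n2, n3, n4, n5, n6⟩ := pattern_ne hab hbc hcd hac had hbd
    exact n2 rfl
  · -- a = u, b = u
    obtain ⟨n1, n2, n3, n4, n5, n6⟩ := pattern_ne hab hbc hcd hac had hbd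
    exact n1 rfl
  · obtain ⟨n1, n2, n3, n4, n5, n6⟩ := pattern_ne hab hbc hcd hac had hbd
    exact n1 rfl
  · obtain ⟨n1, n2, n3, n4, n5, n6⟩ := pattern_ne hab hbc hcd hac had hbd
    exact n1 rfl
  · obtain ⟨n1, n2, n3, n4, n5, n6⟩ := pattern_ne hab hbc hcd hac had hbd
    exact n1 rfl

/-- `H` embeds into the gadget. -/
def gadgetEmb (H : SimpleGraph β) (v : β) : H ↪g gadget H v where
  toFun := Sum.inl
  inj' := fun a b h => Sum.inl.inj h
  map_rel_iff' := by intro a b; exact gadget_adj_inl_inl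

lemma gadget_cliqueNum [Fintype β]
    (hsmall : ∀ c : Finset β, H.IsClique (c : Set β) → v ∈ c → c.card < H.cliqueNum) :
    (gadget H v).cliqueNum = H.cliqueNum := by
  classical
  have hbound : ∀ c : Finset (β ⊕ Unit), (gadget H v).IsClique (c : Set (β ⊕ Unit)) →
      c.card ≤ H.cliqueNum := by
    intro c hc
    set d : Finset β := Finset.univ.filter (fun b => Sum.inl b ∈ c) with hddef
    have hdmem : ∀ b : β, b ∈ d ↔ Sum.inl b ∈ c := by
      intro b; simp [hddef]
    have hdcl : H.IsClique (d : Set β) := by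
      intro a ha b hb hne
      rw [Finset.mem_coe, hdmem] at ha hb
      exact (hc ha hb (fun h => hne (Sum.inl.inj h)))
    by_cases hin : Sum.inr () ∈ c
    · have hceq : c = insert (Sum.inr ()) (d.image Sum.inl) := by
        ext x
        cases x with
        | inl a =>
          simp only [Finset.mem_insert, Finset.mem_image]
          constructor
          · intro hx
            exact Or.inr ⟨a, (hdmem a).mpr hx, rfl⟩
          · rintro (h | ⟨b, hb, hba⟩)
            · exact absurd h (by simp)
            · rw [← hba]
              exact (hdmem b).mp hb
        | inr u =>
          cases u
          simp [hin]
      have hvd : H.IsClique ((insert v d : Finset β) : Set β) := by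
        intro a ha b hb hne
        simp only [Finset.coe_insert, Set.mem_insert_iff, Finset.mem_coe] at ha hb
        rcases ha with rfl | ha <;> rcases hb with rfl | hb
        · exact absurd rfl hne
        · -- a = v, b ∈ d
          have hadj := hc ((hdmem b).mp hb) hin (by simp)
          rw [SimpleGraph.adj_comm]
          rcases hadj with h | h
          · exact h
          · exact absurd h.symm hne
        · have hadj := hc ((hdmem a).mp ha) hin (by simp)
          rcases hadj with h | h
          · exact h
          · exact absurd h hne
        · exact hdcl ha hb hne
      have h1 := hsmall _ hvd (Finset.mem_insert_self v d)
      have h2 : d.card ≤ (insert v d).card := Finset.card_le_card (Finset.subset_insert v d)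
      have h3 : c.card = d.card + 1 := by
        rw [hceq, Finset.card_insert_of_notMem (by simp),
          Finset.card_image_of_injective d Sum.inl_injective]
      omega
    · have hceq : c = d.image Sum.inl := by
        ext x
        cases x with
        | inl a =>
          simp only [Finset.mem_image]
          constructor
          · intro hx; exact ⟨a, (hdmem a).mpr hx, rfl⟩
          · rintro ⟨b, hb, hba⟩
            rw [← hba]
            exact (hdmem b).mp hb
        | inr u =>
          cases u
          simp [hin]
      rw [hceq, Finset.card_image_of_injective d Sum.inl_injective]
      exact hdcl.card_le_cliqueNum
  apply le_antisymm
  · obtain ⟨c, hc⟩ := SimpleGraph.exists_isNClique_cliqueNum (G := gadget H v)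
    rw [← hc.card_eq]
    exact hbound c hc.isClique
  · obtain ⟨s, hs⟩ := SimpleGraph.exists_isNClique_cliqueNum (G := H)
    have him : (gadget H v).IsClique ((s.image Sum.inl : Finset (β ⊕ Unit)) : Set (β ⊕ Unit)) := by
      intro x hx y hy hne
      simp only [Finset.coe_image, Set.mem_image, Finset.mem_coe] at hx hy
      obtain ⟨a, ha, rfl⟩ := hx
      obtain ⟨b, hb, rfl⟩ := hy
      exact hs.isClique ha hb (fun h => hne (h ▸ rfl))
    have hle := him.card_le_cliqueNum
    rwa [Finset.card_image_of_injective s Sum.inl_injective, hs.card_eq] at hle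

open Classical in
noncomputable def cnbhd {γ : Type*} [Fintype γ] (X : SimpleGraph γ) (x : γ) : Finset γ :=
  Finset.univ.filter (fun z => X.Adj x z ∨ z = x)

lemma mem_cnbhd {γ : Type*} [Fintype γ] {X : SimpleGraph γ} {x z : γ} :
    z ∈ cnbhd X x ↔ (X.Adj x z ∨ z = x) := by
  classical
  simp [cnbhd]

lemma gadget_no_retract [Fintype β] (hβ : Nonempty β) :
    ¬ (gadget H v).IsRetract H := by
  classical
  rintro ⟨ρ, γ, h⟩
  have hγinj : Function.Injective γ := by
    intro a b hab
    rw [← h a, ← h b, hab]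
  set Sf : Finset (β ⊕ Unit) := Finset.univ.image γ with hSfdef
  have hSfcard : Sf.card = Fintype.card β := by
    rw [hSfdef, Finset.card_image_of_injective _ hγinj, Finset.card_univ]
  have hVcard : Fintype.card (β ⊕ Unit) = Fintype.card β + 1 := by
    simp [Fintype.card_sum]
  have hcompl : (Finset.univ \ Sf).card = 1 := by
    rw [Finset.card_sdiff_of_subset (Finset.subset_univ Sf), Finset.card_univ, hVcard, hSfcard]
    omega
  obtain ⟨w, hw⟩ := Finset.card_eq_one.mp hcompl
  have hnotin : ∀ x : β ⊕ Unit, x ∉ Sf → x = w := by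
    intro x hx
    have : x ∈ Finset.univ \ Sf := Finset.mem_sdiff.mpr ⟨Finset.mem_univ x, hx⟩
    rw [hw] at this
    exact Finset.mem_singleton.mp this
  have hwno : w ∉ Sf := by
    have : w ∈ Finset.univ \ Sf := hw ▸ Finset.mem_singleton_self w
    exact (Finset.mem_sdiff.mp this).2
  have hmemSf : ∀ x : β ⊕ Unit, x ∈ Sf → ∃ b, γ b = x := by
    intro x hx
    obtain ⟨b, -, rfl⟩ := Finset.mem_image.mp hx
    exact ⟨b, rfl⟩
  set y : β ⊕ Unit := γ (ρ w) with hydef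
  have hySf : y ∈ Sf := Finset.mem_image_of_mem γ (Finset.mem_univ _)
  have hyw : y ≠ w := fun he => hwno (he ▸ hySf)
  have hnadj : ¬(gadget H v).Adj w y := by
    intro hadj
    have h2 := γ.map_adj (ρ.map_adj hadj)
    rw [hydef, h (ρ w)] at h2
    exact (gadget H v).loopless.irrefl _ h2
  have hdom : ∀ x, (gadget H v).Adj w x → (gadget H v).Adj y x := by
    intro x hx
    have hxw : x ≠ w := fun he => (gadget H v).loopless.irrefl w (he ▸ hx)
    have hxS : x ∈ Sf := by
      by_contra hc
      exact hxw (hnotin x hc)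
    obtain ⟨b, rfl⟩ := hmemSf x hxS
    have h2 := γ.map_adj (ρ.map_adj hx)
    rw [h b] at h2
    exact h2
  by_cases htw : ∃ w', w' ≠ w ∧ cnbhd (gadget H v) w' = cnbhd (gadget H v) w
  · obtain ⟨w', hne, heq⟩ := htw
    have hww' : (gadget H v).Adj w w' := by
      have h1 : w' ∈ cnbhd (gadget H v) w' := mem_cnbhd.mpr (Or.inr rfl)
      rw [heq] at h1
      exact (mem_cnbhd.mp h1).resolve_right hne
    have hyw' := hdom w' hww'
    have h1 : y ∈ cnbhd (gadget H v) w' := mem_cnbhd.mpr (Or.inl hyw'.symm)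
    rw [heq] at h1
    rcases mem_cnbhd.mp h1 with h1 | h1
    · exact hnadj h1
    · exact hyw h1
  · push_neg at htw
    -- counting closed-neighbourhood classes
    set j : Finset β → Finset (β ⊕ Unit) :=
      fun s => (s.image Sum.inl) ∪ (if v ∈ s then {Sum.inr ()} else ∅) with hjdef
    have hjmeml : ∀ (s : Finset β) (x : β), Sum.inl x ∈ j s ↔ x ∈ s := by
      intro s x
      by_cases hv : v ∈ s <;> simp [hjdef, hv, Sum.inl_injective.eq_iff]
    have hjmemr : ∀ s : Finset β, Sum.inr () ∈ j s ↔ v ∈ s := by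
      intro s
      by_cases hv : v ∈ s <;> simp [hjdef, hv]
    have hjinj : Function.Injective j := by
      intro s t hst
      ext x
      rw [← hjmeml s x, hst, hjmeml]
    have hcnl : ∀ x : β, cnbhd (gadget H v) (Sum.inl x) = j (cnbhd H x) := by
      intro x
      ext z
      cases z with
      | inl a =>
        rw [mem_cnbhd, hjmeml, mem_cnbhd, Sum.inl_injective.eq_iff]
        exact Iff.rfl
      | inr u =>
        cases u
        rw [mem_cnbhd, hjmemr, mem_cnbhd]
        simp only [gadget_adj_inl_inr]
        constructor
        · rintro ((h' | h') | he)
          · exact Or.inl h'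
          · exact Or.inr h'.symm
          · exact absurd he (by simp)
        · rintro (h' | h')
          · exact Or.inl (Or.inl h')
          · exact Or.inl (Or.inr h'.symm)
    have hcnr : cnbhd (gadget H v) (Sum.inr ()) = j (cnbhd H v) := by
      ext z
      cases z with
      | inl a =>
        rw [mem_cnbhd, hjmeml, mem_cnbhd]
        simp only [gadget_adj_inr_inl]
        constructor
        · rintro ((h' | h') | he)
          · exact Or.inl h'.symm
          · exact Or.inr h'
          · exact absurd he (by simp)
        · rintro (h' | h')
          · exact Or.inl (Or.inl h'.symm)
          · exact Or.inl (Or.inr h')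
      | inr u =>
        cases u
        rw [mem_cnbhd, hjmemr, mem_cnbhd]
        simp
    have htcG : (Finset.univ.image (cnbhd (gadget H v))).card = (Finset.univ.image (cnbhd H)).card := by
      have himg : Finset.univ.image (cnbhd (gadget H v)) = (Finset.univ.image (cnbhd H)).image j := by
        apply Finset.Subset.antisymm
        · intro X hX
          obtain ⟨x, -, rfl⟩ := Finset.mem_image.mp hX
          cases x with
          | inl a =>
            rw [hcnl]
            exact Finset.mem_image_of_mem j (Finset.mem_image_of_mem _ (Finset.mem_univ a))
          | inr u =>
            cases u
            rw [hcnr]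
            exact Finset.mem_image_of_mem j (Finset.mem_image_of_mem _ (Finset.mem_univ v))
        · intro X hX
          obtain ⟨Y, hY, rfl⟩ := Finset.mem_image.mp hX
          obtain ⟨b, -, rfl⟩ := Finset.mem_image.mp hY
          rw [← hcnl]
          exact Finset.mem_image_of_mem _ (Finset.mem_univ (Sum.inl b))
      rw [himg, Finset.card_image_of_injective _ hjinj]
    have hgb : ∀ b : β, (cnbhd (gadget H v) (γ b)).erase w = (cnbhd H b).image γ := by
      intro b
      ext z
      rw [Finset.mem_erase, mem_cnbhd]
      constructor
      · rintro ⟨hzw, hz⟩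
        have hzS : z ∈ Sf := by
          by_contra hc
          exact hzw (hnotin z hc)
        obtain ⟨a, rfl⟩ := hmemSf z hzS
        rcases hz with hadj | he
        · have h2 := ρ.map_adj hadj
          rw [h b, h a] at h2
          exact Finset.mem_image_of_mem γ (mem_cnbhd.mpr (Or.inl h2))
        · rw [hγinj he]
          exact Finset.mem_image_of_mem γ (mem_cnbhd.mpr (Or.inr rfl))
      · intro hz
        obtain ⟨a, ha, rfl⟩ := Finset.mem_image.mp hz
        have haS : γ a ∈ Sf := Finset.mem_image_of_mem γ (Finset.mem_univ a)
        refine ⟨fun he => hwno (he ▸ haS), ?_⟩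
        rcases mem_cnbhd.mp ha with hadj | he
        · exact Or.inl (γ.map_adj hadj)
        · exact Or.inr (he ▸ rfl)
    have key3 : (Finset.univ.erase w).image (fun x => (cnbhd (gadget H v) x).erase w) =
        Finset.univ.image (fun b => (cnbhd H b).image γ) := by
      apply Finset.Subset.antisymm
      · intro X hX
        obtain ⟨x, hx, rfl⟩ := Finset.mem_image.mp hX
        have hxw : x ≠ w := (Finset.mem_erase.mp hx).1
        have hxS : x ∈ Sf := by
          by_contra hc
          exact hxw (hnotin x hc)
        obtain ⟨b, rfl⟩ := hmemSf x hxS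
        rw [hgb b]
        exact Finset.mem_image_of_mem _ (Finset.mem_univ b)
      · intro X hX
        obtain ⟨b, -, rfl⟩ := Finset.mem_image.mp hX
        rw [← hgb b]
        refine Finset.mem_image_of_mem _ (Finset.mem_erase.mpr ⟨?_, Finset.mem_univ _⟩)
        intro he
        exact hwno (he ▸ Finset.mem_image_of_mem γ (Finset.mem_univ b))
    have key4 : (Finset.univ.image (fun b => (cnbhd H b).image γ)).card =
        (Finset.univ.image (cnbhd H)).card := by
      have himg2 : Finset.univ.image (fun b => (cnbhd H b).image γ) =
          (Finset.univ.image (cnbhd H)).image (fun s => s.image γ) := by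
        rw [Finset.image_image]
        rfl
      rw [himg2]
      exact Finset.card_image_of_injective _ (Finset.image_injective hγinj)
    have key1 : ((Finset.univ.erase w).image (cnbhd (gadget H v))) ⊆
        ((Finset.univ.image (cnbhd (gadget H v))).erase (cnbhd (gadget H v) w)) := by
      intro X hX
      obtain ⟨x, hx, rfl⟩ := Finset.mem_image.mp hX
      exact Finset.mem_erase.mpr ⟨htw x (Finset.mem_erase.mp hx).1,
        Finset.mem_image_of_mem _ (Finset.mem_univ x)⟩
    have key2 : ((Finset.univ.erase w).image (fun x => (cnbhd (gadget H v) x).erase w)).card ≤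
        (Finset.univ.image (cnbhd (gadget H v))).card - 1 := by
      have e1 : (Finset.univ.erase w).image (fun x => (cnbhd (gadget H v) x).erase w) =
          ((Finset.univ.erase w).image (cnbhd (gadget H v))).image (fun X => X.erase w) := by
        rw [Finset.image_image]
        rfl
      rw [e1]
      calc (((Finset.univ.erase w).image (cnbhd (gadget H v))).image (fun X => X.erase w)).card
          ≤ ((Finset.univ.erase w).image (cnbhd (gadget H v))).card := Finset.card_image_le
        _ ≤ ((Finset.univ.image (cnbhd (gadget H v))).erase (cnbhd (gadget H v) w)).card :=
            Finset.card_le_card key1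
        _ = (Finset.univ.image (cnbhd (gadget H v))).card - 1 :=
            Finset.card_erase_of_mem (Finset.mem_image_of_mem _ (Finset.mem_univ w))
    have hpos : 1 ≤ (Finset.univ.image (cnbhd H)).card := by
      rw [Nat.one_le_iff_ne_zero, ← Nat.pos_iff_ne_zero, Finset.card_pos]
      exact (Finset.univ_nonempty (α := β)).image _
    rw [key3, key4, htcG] at key2
    omega


end Forward

end AR

/-- A finite connected cograph `H` is a retract of every finite cograph `G` containing `H`
as an induced subgraph with `ω(G) = ω(H)`, if and only if every vertex of `H` lies in a
clique of `H` of cardinality `ω(H)`. -/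
theorem absolute_retract_cograph_iff {β : Type} [Fintype β]
    (H : SimpleGraph β) (hH : H.IsCograph) (hHc : H.Connected) :
    (∀ (α : Type) (G : SimpleGraph α), Fintype α → G.IsCograph →
      Nonempty (H ↪g G) → G.cliqueNum = H.cliqueNum → G.IsRetract H) ↔
    (∀ v : β, ∃ s : Finset β, v ∈ s ∧ H.IsNClique H.cliqueNum s) := by
  constructor
  · intro hLHS v
    by_contra hbad
    push_neg at hbad
    have hsmall : ∀ c : Finset β, H.IsClique (c : Set β) → v ∈ c → c.card < H.cliqueNum := by
      intro c hc hv
      rcases lt_or_eq_of_le (hc.card_le_cliqueNum) with h | h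
      · exact h
      · exact absurd ⟨hc, h⟩ (hbad c hv)
    have hP4 : AR.P4F H := AR.p4f_of_isCograph hH
    exact AR.gadget_no_retract hHc.nonempty (hLHS (β ⊕ Unit) (AR.gadget H v) inferInstance
      (AR.isCograph_of_p4f (AR.gadget_p4f hP4)) ⟨AR.gadgetEmb H v⟩ (AR.gadget_cliqueNum hsmall))
  · intro hRHS α G hFin hCo hEmb hω
    obtain ⟨f⟩ := hEmb
    exact AR.backward H hHc.nonempty α G hFin (AR.p4f_of_isCograph hCo) f hω hRHS
end

section
/- If G is a connected cograph with at least two vertices, then the complement graph of G is disconnected. -/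
open Finset in
private lemma cograph_step {α : Type*} [DecidableEq α] (r : α → α → Prop)
    (hsymm : ∀ x y, r x y → r y x)
    (hP4 : ∀ a b c d, r a b → r b c → r c d → ¬r a c → ¬r a d → ¬r b d → False)
    (v : α) (A B : Finset α) (hA : A.Nonempty) (hB : B.Nonempty)
    (hvA : v ∉ A) (hvB : v ∉ B) (hAB : Disjoint A B)
    (hjoin : ∀ a ∈ A, ∀ b ∈ B, r a b) :
    ∃ C D : Finset α, C.Nonempty ∧ D.Nonempty ∧ Disjoint C D ∧
      C ∪ D = insert v (A ∪ B) ∧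
      ((∀ x ∈ C, ∀ y ∈ D, r x y) ∨ (∀ x ∈ C, ∀ y ∈ D, ¬ r x y)) := by
  classical
  by_cases h1 : ∀ a ∈ A, r v a
  · refine ⟨A, insert v B, hA, insert_nonempty _ _, ?_, ?_, Or.inl ?_⟩
    · rw [Finset.disjoint_insert_right]; exact ⟨hvA, hAB⟩
    · rw [Finset.union_insert]
    · intro x hx y hy
      rcases Finset.mem_insert.mp hy with rfl | hy
      · exact hsymm _ _ (h1 x hx)
      · exact hjoin x hx y hy
  · by_cases h2 : ∀ b ∈ B, r v b
    · refine ⟨insert v A, B, insert_nonempty _ _, hB, ?_, ?_, Or.inl ?_⟩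
      · rw [Finset.disjoint_insert_left]; exact ⟨hvB, hAB⟩
      · rw [Finset.insert_union]
      · intro x hx y hy
        rcases Finset.mem_insert.mp hx with rfl | hx
        · exact h2 y hy
        · exact hjoin x hx y hy
    · push_neg at h1 h2
      obtain ⟨a₀, ha₀A, ha₀⟩ := h1
      obtain ⟨b₀, hb₀B, hb₀⟩ := h2
      by_cases h3 : ∀ x ∈ A ∪ B, ¬ r v x
      · refine ⟨{v}, A ∪ B, Finset.singleton_nonempty _, ⟨a₀, Finset.mem_union_left _ ha₀A⟩,
          ?_, ?_, Or.inr ?_⟩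
        · simp only [Finset.disjoint_singleton_left, Finset.mem_union]
          rintro (h | h) <;> [exact hvA h; exact hvB h]
        · ext z; simp
        · intro x hx y hy
          rw [Finset.mem_singleton] at hx
          subst hx
          exact h3 y hy
      · push_neg at h3
        obtain ⟨w, hwAB, hw⟩ := h3
        have hfact : ∀ w' x, r v w' → ¬ r v x →
            ((w' ∈ A ∧ x ∈ A) ∨ (w' ∈ B ∧ x ∈ B)) → r w' x := by
          intro w' x hw' hx hcase
          by_contra hwx
          rcases hcase with ⟨hwA, hxA⟩ | ⟨hwB, hxB⟩
          · exact hP4 x b₀ w' v (hjoin x hxA b₀ hb₀B) (hsymm _ _ (hjoin w' hwA b₀ hb₀B))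
              (hsymm _ _ hw') (fun h => hwx (hsymm _ _ h)) (fun h => hx (hsymm _ _ h))
              (fun h => hb₀ (hsymm _ _ h))
          · exact hP4 x a₀ w' v (hsymm _ _ (hjoin a₀ ha₀A x hxB)) (hjoin a₀ ha₀A w' hwB)
              (hsymm _ _ hw') (fun h => hwx (hsymm _ _ h)) (fun h => hx (hsymm _ _ h))
              (fun h => ha₀ (hsymm _ _ h))
        set N := (A ∪ B).filter (fun x => r v x) with hN
        set R := (A ∪ B).filter (fun x => ¬ r v x) with hR
        have hvAB : v ∉ A ∪ B := by
          simp only [Finset.mem_union]; rintro (h | h) <;> [exact hvA h; exact hvB h]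
        refine ⟨insert v R, N, insert_nonempty _ _,
          ⟨w, Finset.mem_filter.mpr ⟨hwAB, hw⟩⟩, ?_, ?_, Or.inl ?_⟩
        · rw [Finset.disjoint_insert_left]
          constructor
          · intro h; exact hvAB (Finset.mem_of_mem_filter _ h)
          · exact Finset.disjoint_filter_filter_not _ _ _ |>.symm
        · rw [Finset.insert_union, Finset.union_comm R N, Finset.filter_union_filter_not_eq]
        · intro x hx y hy
          obtain ⟨hyAB, hy'⟩ := Finset.mem_filter.mp hy
          rcases Finset.mem_insert.mp hx with rfl | hx
          · exact hy'
          · obtain ⟨hxAB, hx'⟩ := Finset.mem_filter.mp hx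
            rcases Finset.mem_union.mp hxAB with hxA | hxB <;>
              rcases Finset.mem_union.mp hyAB with hyA | hyB
            · exact hsymm _ _ (hfact y x hy' hx' (Or.inl ⟨hyA, hxA⟩))
            · exact hjoin x hxA y hyB
            · exact hsymm _ _ (hjoin y hyA x hxB)
            · exact hsymm _ _ (hfact y x hy' hx' (Or.inr ⟨hyB, hxB⟩))

open Finset in
private lemma cograph_split {α : Type*} [DecidableEq α] (r : α → α → Prop)
    (hsymm : ∀ x y, r x y → r y x)
    (hP4 : ∀ a b c d, r a b → r b c → r c d → ¬r a c → ¬r a d → ¬r b d → False) :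
    ∀ s : Finset α, 2 ≤ s.card →
      ∃ A B : Finset α, A.Nonempty ∧ B.Nonempty ∧ Disjoint A B ∧ A ∪ B = s ∧
        ((∀ x ∈ A, ∀ y ∈ B, r x y) ∨ (∀ x ∈ A, ∀ y ∈ B, ¬ r x y)) := by
  intro s
  induction s using Finset.strongInduction with
  | _ s ih =>
    intro hs
    by_cases h2 : s.card = 2
    · obtain ⟨x, y, hxy, rfl⟩ := Finset.card_eq_two.mp h2
      refine ⟨{x}, {y}, Finset.singleton_nonempty _, Finset.singleton_nonempty _, by
        simpa using hxy, rfl, ?_⟩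
      by_cases h : r x y
      · exact Or.inl (by simpa using h)
      · exact Or.inr (by simpa using h)
    · have h3 : 3 ≤ s.card := by omega
      have hsne : s.Nonempty := Finset.card_pos.mp (by omega)
      obtain ⟨v, hv⟩ := hsne
      have hss : s.erase v ⊂ s := Finset.erase_ssubset hv
      have hcard : 2 ≤ (s.erase v).card := by
        rw [Finset.card_erase_of_mem hv]; omega
      obtain ⟨A, B, hA, hB, hAB, hun, hor⟩ := ih (s.erase v) hss hcard
      have hvA : v ∉ A := fun h =>
        Finset.notMem_erase v s (hun ▸ Finset.mem_union_left _ h)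
      have hvB : v ∉ B := fun h =>
        Finset.notMem_erase v s (hun ▸ Finset.mem_union_right _ h)
      rcases hor with hjoin | hcojoin
      · obtain ⟨C, D, hC, hD, hCD, hunCD, horCD⟩ :=
          cograph_step r hsymm hP4 v A B hA hB hvA hvB hAB hjoin
        exact ⟨C, D, hC, hD, hCD, by rw [hunCD, hun, Finset.insert_erase hv], horCD⟩
      · have hP4' : ∀ a b c d, ¬r a b → ¬r b c → ¬r c d →
            ¬¬r a c → ¬¬r a d → ¬¬r b d → False := by
          intro a b c d h1 h2' h3' h4 h5 h6
          exact hP4 c a d b (hsymm _ _ (not_not.mp h4)) (not_not.mp h5)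
            (hsymm _ _ (not_not.mp h6)) h3' (fun h => h2' (hsymm _ _ h)) h1
        obtain ⟨C, D, hC, hD, hCD, hunCD, horCD⟩ :=
          cograph_step (fun x y => ¬ r x y) (fun x y h h' => h (hsymm y x h')) hP4'
            v A B hA hB hvA hvB hAB hcojoin
        refine ⟨C, D, hC, hD, hCD, by rw [hunCD, hun, Finset.insert_erase hv], ?_⟩
        rcases horCD with h | h
        · exact Or.inr h
        · exact Or.inl (fun x hx y hy => not_not.mp (h x hx y hy))

/-- If `G` is a connected cograph with at least two vertices, then the complement of `G`
is disconnected. -/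
theorem connected_cograph_complement_disconnected {α : Type*} [Fintype α]
    (G : SimpleGraph α) (hG : G.IsCograph) (hc : G.Connected) (h2 : 1 < Fintype.card α) :
    ¬ Gᶜ.Connected := by
  classical
  have hP4 : ∀ a b c d : α, G.Adj a b → G.Adj b c → G.Adj c d →
      ¬G.Adj a c → ¬G.Adj a d → ¬G.Adj b d → False := by
    intro a b c d hab hbc hcd hac had hbd
    have hac' : a ≠ c := by rintro rfl; exact had hcd
    have had' : a ≠ d := by rintro rfl; exact hac hcd.symm
    have hbd' : b ≠ d := by rintro rfl; exact had hab
    refine hG.false ⟨⟨![a, b, c, d], ?_⟩, ?_⟩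
    · intro i j hij
      fin_cases i <;> fin_cases j <;>
        simp_all [hab.ne, hbc.ne, hcd.ne, hab.ne', hbc.ne', hcd.ne',
          hac', had', hbd', hac'.symm, had'.symm, hbd'.symm]
    · intro i j
      fin_cases i <;> fin_cases j <;>
        simp only [SimpleGraph.pathGraph_adj, Matrix.cons_val_zero, Matrix.cons_val_one,
          Matrix.head_cons, Matrix.cons_val_two, Matrix.tail_cons, Matrix.cons_val_three,
          Matrix.cons_val_fin_one] <;>
        first
          | exact iff_of_true hab (by decide) | exact iff_of_true hab.symm (by decide)
          | exact iff_of_true hbc (by decide) | exact iff_of_true hbc.symm (by decide)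
          | exact iff_of_true hcd (by decide) | exact iff_of_true hcd.symm (by decide)
          | exact iff_of_false hac (by decide)
          | exact iff_of_false (fun h => hac (G.symm h)) (by decide)
          | exact iff_of_false had (by decide)
          | exact iff_of_false (fun h => had (G.symm h)) (by decide)
          | exact iff_of_false hbd (by decide)
          | exact iff_of_false (fun h => hbd (G.symm h)) (by decide)
          | exact iff_of_false (G.irrefl) (by decide)
          | exact iff_of_false (fun h => hac h.symm) (by decide)
          | exact iff_of_false (fun h => had h.symm) (by decide)
          | exact iff_of_false (fun h => hbd h.symm) (by decide)
  obtain ⟨A, B, hA, hB, hdisj, hun, hor⟩ :=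
    cograph_split G.Adj (fun _ _ h => h.symm) hP4 Finset.univ
      (by rw [Finset.card_univ]; exact h2)
  obtain ⟨a, ha⟩ := hA
  obtain ⟨b, hb⟩ := hB
  have hbA : b ∉ A := fun h => Finset.disjoint_left.mp hdisj h hb
  have walkA : ∀ (H : SimpleGraph α), (∀ x y, H.Adj x y → x ∈ A → y ∈ A) →
      ∀ x y : α, H.Reachable x y → x ∈ A → y ∈ A := by
    intro H hstep x y hr
    obtain ⟨p⟩ := hr
    induction p with
    | nil => exact id
    | cons h _ ih => exact fun hx => ih (hstep _ _ h hx)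
  have hmem : ∀ y : α, y ∈ A ∨ y ∈ B := fun y =>
    Finset.mem_union.mp (hun ▸ Finset.mem_univ y)
  rcases hor with hjoin | hcojoin
  · intro hconn
    refine hbA (walkA Gᶜ ?_ a b (hconn.preconnected a b) ha)
    intro x y hxy hx
    rcases hmem y with hy | hy
    · exact hy
    · exact absurd (hjoin x hx y hy) hxy.2
  · exfalso
    refine hbA (walkA G ?_ a b (hc.preconnected a b) ha)
    intro x y hxy hx
    rcases hmem y with hy | hy
    · exact hy
    · exact absurd hxy (hcojoin x hx y hy)
end
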